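/- arXiv:1612.01767 — 3 statements merged into one kernel-verified Lean document; each statement's English description precedes it below -/
import Mathlib

section
/- Let A₁, …, A_m be nonnegative n×n real matrices and α₁, …, α_m > 0 with α := Σα_j ≥ 1, and let B_i be the Hadamard weighted geometric mean of the cyclic shift starting at i and P_j = A_j ⋯ A_m A₁ ⋯ A_{j-1}. Then ρ(B₁B₂⋯B_m) ≤ ρ(P₁^{(α₁)} ∘ ⋯ ∘ P_m^{(α_m)}) ≤ ρ(A₁A₂⋯A_m)^α. -/
open Finset

private lemma sum_rpow_le_rpow_sum' {J : Type*} (s : Finset J) (x : J → ℝ)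
    (hx : ∀ j, 0 ≤ x j) {σ : ℝ} (hσ : 1 ≤ σ) :
    ∑ j ∈ s, x j ^ σ ≤ (∑ j ∈ s, x j) ^ σ := by
  have hσ0 : σ ≠ 0 := by linarith
  set S := ∑ j ∈ s, x j with hSdef
  have hS : 0 ≤ S := Finset.sum_nonneg fun j _ => hx j
  have key : ∀ j ∈ s, x j ^ σ ≤ x j * S ^ (σ - 1) := by
    intro j hj
    have hxle : x j ≤ S := Finset.single_le_sum (fun j _ => hx j) hj
    have e1 : x j ^ σ = x j ^ (1 : ℝ) * x j ^ (σ - 1) := by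
      rw [← Real.rpow_add' (hx j) (by norm_num [hσ0])]
      norm_num
    rw [e1, Real.rpow_one]
    exact mul_le_mul_of_nonneg_left
      (Real.rpow_le_rpow (hx j) hxle (by linarith)) (hx j)
  calc ∑ j ∈ s, x j ^ σ ≤ ∑ j ∈ s, x j * S ^ (σ - 1) := Finset.sum_le_sum key
    _ = S * S ^ (σ - 1) := by rw [← Finset.sum_mul]
    _ = S ^ (1 : ℝ) * S ^ (σ - 1) := by rw [Real.rpow_one]
    _ = S ^ σ := by rw [← Real.rpow_add' hS (by norm_num [hσ0])]; norm_num

private lemma holder_one {ι J : Type*} [Fintype ι] (s : Finset J)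
    (f : ι → J → ℝ) (hf : ∀ k j, 0 ≤ f k j) (β : ι → ℝ) (hβ : ∀ k, 0 < β k)
    (hβ1 : ∑ k, β k = 1) :
    ∑ j ∈ s, ∏ k, f k j ^ β k ≤ ∏ k, (∑ j ∈ s, f k j) ^ β k := by
  by_cases hz : ∃ k, ∑ j ∈ s, f k j = 0
  · obtain ⟨k0, hk0⟩ := hz
    have hf0 : ∀ j ∈ s, f k0 j = 0 := fun j hj =>
      (Finset.sum_eq_zero_iff_of_nonneg (fun j _ => hf k0 j)).1 hk0 j hj
    have hL : ∑ j ∈ s, ∏ k, f k j ^ β k = 0 := by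
      refine Finset.sum_eq_zero fun j hj => ?_
      refine Finset.prod_eq_zero (Finset.mem_univ k0) ?_
      rw [hf0 j hj, Real.zero_rpow (hβ k0).ne']
    rw [hL]
    exact Finset.prod_nonneg fun k _ =>
      Real.rpow_nonneg (Finset.sum_nonneg fun j _ => hf k j) _
  · push_neg at hz
    set S : ι → ℝ := fun k => ∑ j ∈ s, f k j with hSdef
    have hS : ∀ k, 0 < S k := fun k =>
      lt_of_le_of_ne (Finset.sum_nonneg fun j _ => hf k j) (Ne.symm (hz k))
    have key : ∑ j ∈ s, ∏ k, (f k j / S k) ^ β k ≤ 1 := by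
      calc ∑ j ∈ s, ∏ k, (f k j / S k) ^ β k
          ≤ ∑ j ∈ s, ∑ k, β k * (f k j / S k) := by
            refine Finset.sum_le_sum fun j _ => ?_
            exact Real.geom_mean_le_arith_mean_weighted univ β (fun k => f k j / S k)
              (fun k _ => (hβ k).le) hβ1 (fun k _ => div_nonneg (hf k j) (hS k).le)
        _ = ∑ k, β k * (S k / S k) := by
            rw [Finset.sum_comm]
            refine Finset.sum_congr rfl fun k _ => ?_
            rw [← Finset.mul_sum, ← Finset.sum_div]
        _ = 1 := by
            rw [← hβ1]
            refine Finset.sum_congr rfl fun k _ => ?_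
            rw [div_self (hS k).ne', mul_one]
    have hPpos : (0:ℝ) < ∏ k, S k ^ β k :=
      Finset.prod_pos fun k _ => Real.rpow_pos_of_pos (hS k) _
    have expand : ∀ j, ∏ k, (f k j / S k) ^ β k = (∏ k, f k j ^ β k) / ∏ k, S k ^ β k := by
      intro j
      rw [← Finset.prod_div_distrib]
      exact Finset.prod_congr rfl fun k _ => Real.div_rpow (hf k j) (hS k).le _
    calc ∑ j ∈ s, ∏ k, f k j ^ β k
        = (∑ j ∈ s, ∏ k, (f k j / S k) ^ β k) * ∏ k, S k ^ β k := by
          rw [Finset.sum_congr rfl fun j _ => expand j, ← Finset.sum_div,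
            div_mul_cancel₀ _ hPpos.ne']
      _ ≤ 1 * ∏ k, S k ^ β k := mul_le_mul_of_nonneg_right key hPpos.le
      _ = ∏ k, S k ^ β k := one_mul _

private lemma holder_ge {ι J : Type*} [Fintype ι] (s : Finset J)
    (f : ι → J → ℝ) (hf : ∀ k j, 0 ≤ f k j) (α : ι → ℝ) (hα : ∀ k, 0 < α k)
    (hσ : 1 ≤ ∑ k, α k) :
    ∑ j ∈ s, ∏ k, f k j ^ α k ≤ ∏ k, (∑ j ∈ s, f k j) ^ α k := by
  set σ := ∑ k, α k with hσdef
  have hσ0 : 0 < σ := lt_of_lt_of_le one_pos hσ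
  set β : ι → ℝ := fun k => α k / σ with hβdef
  have hβ : ∀ k, 0 < β k := fun k => div_pos (hα k) hσ0
  have hβ1 : ∑ k, β k = 1 := by
    rw [hβdef, ← Finset.sum_div, ← hσdef, div_self hσ0.ne']
  have e1 : ∀ k (x : ℝ), 0 ≤ x → x ^ α k = (x ^ σ) ^ β k := by
    intro k x hx
    rw [← Real.rpow_mul hx]
    congr 1
    rw [mul_div_cancel₀ _ hσ0.ne']
  calc ∑ j ∈ s, ∏ k, f k j ^ α k
      = ∑ j ∈ s, ∏ k, (f k j ^ σ) ^ β k := by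
        refine Finset.sum_congr rfl fun j _ => Finset.prod_congr rfl fun k _ => ?_
        exact e1 k _ (hf k j)
    _ ≤ ∏ k, (∑ j ∈ s, f k j ^ σ) ^ β k :=
        holder_one s (fun k j => f k j ^ σ)
          (fun k j => Real.rpow_nonneg (hf k j) _) β hβ hβ1
    _ ≤ ∏ k, ((∑ j ∈ s, f k j) ^ σ) ^ β k := by
        refine Finset.prod_le_prod (fun k _ => Real.rpow_nonneg
          (Finset.sum_nonneg fun j _ => Real.rpow_nonneg (hf k j) _) _) fun k _ => ?_
        exact Real.rpow_le_rpow
          (Finset.sum_nonneg fun j _ => Real.rpow_nonneg (hf k j) _)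
          (sum_rpow_le_rpow_sum' s (f k) (hf k) hσ)
          (hβ k).le
    _ = ∏ k, (∑ j ∈ s, f k j) ^ α k := by
        refine Finset.prod_congr rfl fun k _ => ?_
        exact (e1 k _ (Finset.sum_nonneg fun j _ => hf k j)).symm

open Finset Matrix
set_option linter.unusedSectionVars false

section MatrixEntry
variable {N : Type*} [Fintype N] [DecidableEq N]

private lemma entry_mul_nonneg {X Y : Matrix N N ℝ} (hX : ∀ i j, 0 ≤ X i j)
    (hY : ∀ i j, 0 ≤ Y i j) : ∀ i j, 0 ≤ (X * Y) i j := by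
  intro i j
  rw [Matrix.mul_apply]
  exact Finset.sum_nonneg fun l _ => mul_nonneg (hX i l) (hY l j)

private lemma entry_one_nonneg : ∀ i j, (0:ℝ) ≤ (1 : Matrix N N ℝ) i j := by
  intro i j
  rw [Matrix.one_apply]
  split <;> norm_num

private lemma entry_listProd_nonneg (L : List (Matrix N N ℝ))
    (h : ∀ B ∈ L, ∀ i j, 0 ≤ B i j) : ∀ i j, 0 ≤ L.prod i j := by
  induction L with
  | nil => simpa using entry_one_nonneg
  | cons X L ih =>
    rw [List.prod_cons]
    exact entry_mul_nonneg (h X List.mem_cons_self)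
      (ih fun B hB => h B (List.mem_cons_of_mem _ hB))

private lemma entry_pow_nonneg {X : Matrix N N ℝ} (hX : ∀ i j, 0 ≤ X i j) (n : ℕ) :
    ∀ i j, 0 ≤ (X ^ n) i j := by
  induction n with
  | zero => simpa [pow_zero] using entry_one_nonneg
  | succ n ih => rw [pow_succ]; exact entry_mul_nonneg ih hX

private lemma entry_mul_mono {X X' Y Y' : Matrix N N ℝ} (hX : ∀ i j, 0 ≤ X i j)
    (hY : ∀ i j, 0 ≤ Y i j) (hXX : ∀ i j, X i j ≤ X' i j) (hYY : ∀ i j, Y i j ≤ Y' i j) :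
    ∀ i j, (X * Y) i j ≤ (X' * Y') i j := by
  intro i j
  rw [Matrix.mul_apply, Matrix.mul_apply]
  refine Finset.sum_le_sum fun l _ => ?_
  exact mul_le_mul (hXX i l) (hYY l j) (hY l j) (le_trans (hX i l) (hXX i l))

private lemma entry_pow_mono {X Y : Matrix N N ℝ} (hX : ∀ i j, 0 ≤ X i j)
    (hXY : ∀ i j, X i j ≤ Y i j) (n : ℕ) : ∀ i j, (X ^ n) i j ≤ (Y ^ n) i j := by
  induction n with
  | zero => simp [pow_zero]
  | succ n ih =>
    rw [pow_succ, pow_succ]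
    exact entry_mul_mono (entry_pow_nonneg hX n) hX ih hXY

end MatrixEntry

section HadG
variable {m : ℕ} {N : Type*} [Fintype N] [DecidableEq N]

private noncomputable def hadG (α : Fin m → ℝ) (X : Fin m → Matrix N N ℝ) : Matrix N N ℝ :=
  fun x y => ∏ k, (X k x y) ^ (α k)

private lemma hadG_nonneg (α : Fin m → ℝ) (X : Fin m → Matrix N N ℝ)
    (hX : ∀ k i j, 0 ≤ X k i j) : ∀ i j, 0 ≤ hadG α X i j := fun i j =>
  Finset.prod_nonneg fun k _ => Real.rpow_nonneg (hX k i j) _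

private lemma hadG_mul_le (α : Fin m → ℝ) (hα : ∀ k, 0 < α k) (hsum : 1 ≤ ∑ k, α k)
    (X Y : Fin m → Matrix N N ℝ) (hX : ∀ k i j, 0 ≤ X k i j) (hY : ∀ k i j, 0 ≤ Y k i j) :
    ∀ i j, (hadG α X * hadG α Y) i j ≤ hadG α (fun k => X k * Y k) i j := by
  intro i j
  rw [Matrix.mul_apply]
  calc ∑ l, hadG α X i l * hadG α Y l j
      = ∑ l, ∏ k, (X k i l * Y k l j) ^ α k := by
        refine Finset.sum_congr rfl fun l _ => ?_
        rw [hadG, hadG, ← Finset.prod_mul_distrib]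
        exact Finset.prod_congr rfl fun k _ =>
          (Real.mul_rpow (hX k i l) (hY k l j)).symm
    _ ≤ ∏ k, (∑ l, X k i l * Y k l j) ^ α k :=
        holder_ge Finset.univ (fun k l => X k i l * Y k l j)
          (fun k l => mul_nonneg (hX k i l) (hY k l j)) α hα hsum
    _ = hadG α (fun k => X k * Y k) i j := by
        rw [hadG]
        exact Finset.prod_congr rfl fun k _ => by rw [Matrix.mul_apply]

private lemma hadG_list_le (α : Fin m → ℝ) (hα : ∀ k, 0 < α k) (hsum : 1 ≤ ∑ k, α k)
    (L : List (Fin m → Matrix N N ℝ)) (hL : ∀ X ∈ L, ∀ k i j, 0 ≤ X k i j) :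
    ∀ i j, (L.map (hadG α)).prod i j ≤ hadG α (fun k => (L.map (fun X => X k)).prod) i j := by
  induction L with
  | nil =>
    intro i j
    simp only [List.map_nil, List.prod_nil]
    rcases eq_or_ne i j with rfl | hij
    · rw [Matrix.one_apply_eq, hadG]
      rw [show (∏ k, ((1 : Matrix N N ℝ) i i) ^ α k) = 1 by
        simp [Matrix.one_apply_eq]]
    · rw [Matrix.one_apply_ne hij]
      exact hadG_nonneg α _ (fun k => entry_one_nonneg) i j
  | cons X L ih =>
    intro i j
    simp only [List.map_cons, List.prod_cons]
    have hXn : ∀ k i j, 0 ≤ X k i j := hL X List.mem_cons_self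
    have hLn : ∀ Y ∈ L, ∀ k i j, 0 ≤ Y k i j := fun Y hY => hL Y (List.mem_cons_of_mem _ hY)
    have hProdn : ∀ i j, 0 ≤ (L.map (hadG α)).prod i j :=
      entry_listProd_nonneg _ (by
        intro B hB
        obtain ⟨Y, hY, rfl⟩ := List.mem_map.1 hB
        exact hadG_nonneg α Y (hLn Y hY))
    have hPkn : ∀ k i j, 0 ≤ (L.map (fun X => X k)).prod i j := by
      intro k
      refine entry_listProd_nonneg _ ?_
      intro B hB
      obtain ⟨Y, hY, rfl⟩ := List.mem_map.1 hB
      exact hLn Y hY k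
    calc (hadG α X * (L.map (hadG α)).prod) i j
        ≤ (hadG α X * hadG α (fun k => (L.map (fun X => X k)).prod)) i j :=
          entry_mul_mono (hadG_nonneg α X hXn) hProdn (fun _ _ => le_rfl) (ih hLn) i j
      _ ≤ hadG α (fun k => X k * (L.map (fun X => X k)).prod) i j :=
          hadG_mul_le α hα hsum X _ hXn hPkn i j

end HadG

section Norms
attribute [local instance] Matrix.linftyOpNormedRing Matrix.linftyOpNormedAlgebra

variable {m : ℕ} {N : Type*} [Fintype N] [DecidableEq N]

private lemma map_pow_ofReal (X : Matrix N N ℝ) (n : ℕ) :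
    (X ^ n).map (Complex.ofReal) = (X.map Complex.ofReal) ^ n := by
  induction n with
  | zero => simpa [pow_zero] using Matrix.map_one _ Complex.ofReal_zero Complex.ofReal_one
  | succ n ih => rw [pow_succ, pow_succ, ← ih]; exact Matrix.map_mul (f := Complex.ofRealHom)

private lemma nnnorm_map_ofReal (X : Matrix N N ℝ) :
    ‖X.map (Complex.ofReal)‖₊ = ‖X‖₊ := by
  rw [Matrix.linfty_opNNNorm_def, Matrix.linfty_opNNNorm_def]
  exact Finset.sup_congr rfl fun i _ => Finset.sum_congr rfl fun j _ => by
    simp [Matrix.map_apply]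

private lemma rowsum_le_norm {Y : Matrix N N ℝ} (hY : ∀ i j, 0 ≤ Y i j) (i : N) :
    ∑ j, Y i j ≤ ‖Y‖ := by
  rw [Matrix.linfty_opNorm_def]
  have h1 : (∑ j, ‖Y i j‖₊) ≤ (Finset.univ.sup fun i => ∑ j, ‖Y i j‖₊) :=
    Finset.le_sup (f := fun i => ∑ j, ‖Y i j‖₊) (Finset.mem_univ i)
  calc ∑ j, Y i j = ((∑ j, ‖Y i j‖₊ : NNReal) : ℝ) := by
        push_cast
        exact Finset.sum_congr rfl fun j _ => by
          rw [Real.norm_eq_abs, abs_of_nonneg (hY i j)]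
    _ ≤ _ := NNReal.coe_le_coe.2 h1

private lemma norm_le_of_rowsum {Y : Matrix N N ℝ} {c : ℝ} (hc0 : 0 ≤ c)
    (hY : ∀ i j, 0 ≤ Y i j) (hc : ∀ i, ∑ j, Y i j ≤ c) : ‖Y‖ ≤ c := by
  rw [Matrix.linfty_opNorm_def]
  have h1 : (Finset.univ.sup fun i => ∑ j, ‖Y i j‖₊) ≤ c.toNNReal := by
    refine Finset.sup_le fun i _ => (Real.le_toNNReal_iff_coe_le hc0).2 ?_
    calc ((∑ j, ‖Y i j‖₊ : NNReal) : ℝ) = ∑ j, Y i j := by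
          push_cast
          exact Finset.sum_congr rfl fun j _ => by
            rw [Real.norm_eq_abs, abs_of_nonneg (hY i j)]
      _ ≤ c := hc i
  calc ((Finset.univ.sup fun i => ∑ j, ‖Y i j‖₊ : NNReal) : ℝ)
      ≤ (c.toNNReal : ℝ) := NNReal.coe_le_coe.2 h1
    _ = c := Real.coe_toNNReal _ hc0

private lemma nnnorm_entry_mono {X Y : Matrix N N ℝ} (hX : ∀ i j, 0 ≤ X i j)
    (hXY : ∀ i j, X i j ≤ Y i j) : ‖X‖₊ ≤ ‖Y‖₊ := by
  rw [Matrix.linfty_opNNNorm_def, Matrix.linfty_opNNNorm_def]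
  refine Finset.sup_mono_fun fun i _ => Finset.sum_le_sum fun j _ => ?_
  rw [← NNReal.coe_le_coe, coe_nnnorm, coe_nnnorm, Real.norm_eq_abs, Real.norm_eq_abs,
    abs_of_nonneg (hX i j), abs_of_nonneg (le_trans (hX i j) (hXY i j))]
  exact hXY i j

private lemma norm_entry_mono {X Y : Matrix N N ℝ} (hX : ∀ i j, 0 ≤ X i j)
    (hXY : ∀ i j, X i j ≤ Y i j) : ‖X‖ ≤ ‖Y‖ := by
  have := nnnorm_entry_mono hX hXY
  exact_mod_cast NNReal.coe_le_coe.2 this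

private lemma norm_hadG_le (α : Fin m → ℝ) (hα : ∀ k, 0 < α k) (hsum : 1 ≤ ∑ k, α k)
    (X : Fin m → Matrix N N ℝ) (hX : ∀ k i j, 0 ≤ X k i j) {c : Fin m → ℝ}
    (hc : ∀ k, ‖X k‖ ≤ c k) : ‖hadG α X‖ ≤ ∏ k, c k ^ α k := by
  have hc0 : ∀ k, 0 ≤ c k := fun k => le_trans (norm_nonneg _) (hc k)
  refine norm_le_of_rowsum (Finset.prod_nonneg fun k _ => Real.rpow_nonneg (hc0 k) _)
    (hadG_nonneg α X hX) fun i => ?_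
  calc ∑ j, hadG α X i j = ∑ j, ∏ k, (X k i j) ^ α k := rfl
    _ ≤ ∏ k, (∑ j, X k i j) ^ α k :=
        holder_ge Finset.univ (fun k j => X k i j) (fun k j => hX k i j) α hα hsum
    _ ≤ ∏ k, c k ^ α k := by
        refine Finset.prod_le_prod (fun k _ => Real.rpow_nonneg
          (Finset.sum_nonneg fun j _ => hX k i j) _) fun k _ => ?_
        exact Real.rpow_le_rpow (Finset.sum_nonneg fun j _ => hX k i j)
          (le_trans (rowsum_le_norm (hX k) i) (hc k)) (hα k).le

end Norms

/-- Spectral radius of a real matrix: max modulus of its (complex) eigenvalues. -/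
noncomputable def specRad {N : Type*} [Fintype N] [DecidableEq N] (A : Matrix N N ℝ) : ℝ :=
  (spectralRadius ℂ (A.map Complex.ofReal)).toReal

/-- Operator norm induced by the Euclidean (ℓ²) norm. -/
noncomputable def l2OpNorm {N : Type*} [Fintype N] [DecidableEq N] (A : Matrix N N ℝ) : ℝ :=
  ‖Matrix.toEuclideanCLM (𝕜 := ℝ) A‖

/-- Entrywise α-th power (with the convention 0^0 = 1, as for `Real.rpow`). -/
noncomputable def hadPow {N : Type*} (A : Matrix N N ℝ) (α : ℝ) : Matrix N N ℝ :=
  fun i j => A i j ^ α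

section Spectral
attribute [local instance] Matrix.linftyOpNormedRing Matrix.linftyOpNormedAlgebra

open Filter

variable {N : Type*} [Fintype N] [DecidableEq N]

private lemma specRad_of_isEmpty [IsEmpty N] (X : Matrix N N ℝ) : specRad X = 0 := by
  have : spectrum ℂ (X.map Complex.ofReal) = ∅ := by
    ext k
    simp only [Set.mem_empty_iff_false, iff_false, spectrum.mem_iff]
    push_neg
    exact isUnit_of_subsingleton _
  rw [specRad, spectralRadius, this]
  simp

private lemma spectralRadius_ne_top [Nonempty N] (a : Matrix N N ℂ) :
    spectralRadius ℂ a ≠ ⊤ :=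
  ne_top_of_le_ne_top ENNReal.coe_ne_top (spectrum.spectralRadius_le_nnnorm (𝕜 := ℂ) a)

private lemma specRad_le_aux [Nonempty N] (X : Matrix N N ℝ) (s : ℕ) :
    spectralRadius ℂ (X.map Complex.ofReal) ≤
      (‖X ^ (s+1)‖₊ : ENNReal) ^ (1/((s:ℝ)+1)) := by
  have h := spectrum.spectralRadius_le_pow_nnnorm_pow_one_div ℂ (X.map Complex.ofReal) s
  rw [nnnorm_one, ENNReal.coe_one, ENNReal.one_rpow, mul_one, ← map_pow_ofReal,
    nnnorm_map_ofReal] at h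
  exact_mod_cast h

private lemma specRad_le_norm_pow [Nonempty N] (X : Matrix N N ℝ) (s : ℕ) :
    specRad X ≤ ‖X ^ (s+1)‖ ^ (1/((s:ℝ)+1)) := by
  have h := specRad_le_aux X s
  have hne : ((‖X ^ (s+1)‖₊ : ENNReal) ^ (1/((s:ℝ)+1))) ≠ ⊤ :=
    ENNReal.rpow_ne_top_of_nonneg (by positivity) ENNReal.coe_ne_top
  have := ENNReal.toReal_mono hne h
  rwa [← ENNReal.toReal_rpow, ENNReal.coe_toReal, coe_nnnorm] at this

private lemma specRad_mono [Nonempty N] {X Y : Matrix N N ℝ} (hX : ∀ i j, 0 ≤ X i j)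
    (hXY : ∀ i j, X i j ≤ Y i j) : specRad X ≤ specRad Y := by
  have gel := spectrum.pow_nnnorm_pow_one_div_tendsto_nhds_spectralRadius
      (Y.map Complex.ofReal)
  have h2 := gel.comp (tendsto_add_atTop_nat 1)
  have key : spectralRadius ℂ (X.map Complex.ofReal) ≤
      spectralRadius ℂ (Y.map Complex.ofReal) := by
    refine ge_of_tendsto h2 (Eventually.of_forall fun s => ?_)
    have hb : ‖X ^ (s+1)‖₊ ≤ ‖Y ^ (s+1)‖₊ :=
      nnnorm_entry_mono (entry_pow_nonneg hX _) (entry_pow_mono hX hXY _)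
    calc spectralRadius ℂ (X.map Complex.ofReal)
        ≤ (‖X ^ (s+1)‖₊ : ENNReal) ^ (1/((s:ℝ)+1)) := specRad_le_aux X s
      _ ≤ (‖Y ^ (s+1)‖₊ : ENNReal) ^ (1/((s:ℝ)+1)) :=
          ENNReal.rpow_le_rpow (ENNReal.coe_le_coe.2 hb) (by positivity)
      _ = ((fun n : ℕ => (‖(Y.map Complex.ofReal) ^ n‖₊ : ENNReal) ^ (1/(n:ℝ)))
            ∘ (fun a => a + 1)) s := by
          rw [Function.comp_apply, ← map_pow_ofReal, nnnorm_map_ofReal]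
          push_cast
          ring_nf
  exact ENNReal.toReal_mono (spectralRadius_ne_top _) key

end Spectral

private lemma pow_succ_rotate {M : Type*} [Monoid M] (x y : M) (s : ℕ) :
    (y * x) ^ (s + 1) = y * (x * y) ^ s * x := by
  induction s with
  | zero => simp
  | succ s ih =>
    rw [pow_succ (y * x), ih, pow_succ (x * y)]
    simp only [mul_assoc]

/-- `B_i`: Hadamard weighted geometric mean of the cyclic shift starting at `i`. -/
noncomputable def cycGeo {m : ℕ} {N : Type*} (A : Fin m → Matrix N N ℝ) (α : Fin m → ℝ)
    (i : Fin m) : Matrix N N ℝ :=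
  fun x y => ∏ k, (A (i + k) x y) ^ (α k)

/-- `P_j = A_j A_{j+1} ⋯ A_m A₁ ⋯ A_{j-1}`, the cyclic product starting at `j`. -/
noncomputable def cycProd {m : ℕ} {N : Type*} [Fintype N] [DecidableEq N]
    (A : Fin m → Matrix N N ℝ) (j : Fin m) : Matrix N N ℝ :=
  (List.ofFn fun k => A (j + k)).prod

private lemma ofFn_rotate {m : ℕ} {β : Type*} (A : Fin m → β) (k : Fin m) :
    List.ofFn (fun l => A (k + l)) = (List.ofFn A).rotate k.val := by
  apply List.ext_getElem
  · simp
  intro i h1 h2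
  rw [List.getElem_rotate]
  simp only [List.getElem_ofFn, List.length_ofFn]
  congr 1
  apply Fin.ext
  simp [Fin.add_def, add_comm]

private lemma cycProd_decomp {m : ℕ} {N : Type*} [Fintype N] [DecidableEq N]
    (A : Fin m → Matrix N N ℝ) (k : Fin m) :
    cycProd A k = ((List.ofFn A).drop k.val).prod * ((List.ofFn A).take k.val).prod := by
  rw [cycProd, ofFn_rotate,
    List.rotate_eq_drop_append_take (by simpa using k.isLt.le), List.prod_append]

private lemma prod_take_drop {m : ℕ} {N : Type*} [Fintype N] [DecidableEq N]
    (A : Fin m → Matrix N N ℝ) (k : Fin m) :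
    (List.ofFn A).prod =
      ((List.ofFn A).take k.val).prod * ((List.ofFn A).drop k.val).prod := by
  conv_lhs => rw [← List.take_append_drop k.val (List.ofFn A)]
  rw [List.prod_append]

private lemma prod_rpow_const {ι : Type*} [Fintype ι] {x : ℝ} (hx : 0 < x) (α : ι → ℝ) :
    ∏ k, x ^ α k = x ^ (∑ k, α k) := by
  simp only [Real.rpow_def_of_pos hx, ← Real.exp_sum, ← Finset.mul_sum]

section Main
attribute [local instance] Matrix.linftyOpNormedRing Matrix.linftyOpNormedAlgebra
open Filter Topology

theorem stmt10 {m : ℕ} (hm : 0 < m) {N : Type*} [Fintype N] [DecidableEq N]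
    (A : Fin m → Matrix N N ℝ) (hA : ∀ k, ∀ i j, 0 ≤ A k i j)
    (α : Fin m → ℝ) (hα : ∀ k, 0 < α k) (hsum : 1 ≤ ∑ k, α k) :
    specRad (List.ofFn (cycGeo A α)).prod ≤
        specRad (fun i j => ∏ k, (cycProd A k i j) ^ (α k)) ∧
      specRad (fun i j => ∏ k, (cycProd A k i j) ^ (α k)) ≤
        specRad (List.ofFn A).prod ^ (∑ k, α k) := by
  classical
  cases isEmpty_or_nonempty N with
  | inl hN =>
    rw [specRad_of_isEmpty, specRad_of_isEmpty]
    exact ⟨(specRad_of_isEmpty _).ge, (specRad_of_isEmpty _).le.trans (Real.rpow_nonneg le_rfl _)⟩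
  | inr hN =>
    have hCdef : (fun i j => ∏ k, (cycProd A k i j) ^ (α k)) = hadG α (cycProd A) := rfl
    rw [hCdef]
    have hP : ∀ k i j, 0 ≤ cycProd A k i j := by
      intro k
      refine entry_listProd_nonneg _ ?_
      intro B hB
      obtain ⟨l, hl⟩ := ((List.mem_ofFn).1 hB)
      exact hl ▸ hA _
    have hCn : ∀ i j, 0 ≤ hadG α (cycProd A) i j := hadG_nonneg _ _ hP
    constructor
    · -- Part 1
      set L : List (Fin m → Matrix N N ℝ) := List.ofFn (fun i => fun k => A (i + k)) with hL
      have hF : ∀ X ∈ L, ∀ k i j, 0 ≤ X k i j := by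
        intro X hX k i j
        obtain ⟨i0, hi0⟩ := ((List.mem_ofFn).1 hX)
        rw [← hi0]
        exact hA _ _ _
      have key := hadG_list_le α hα hsum L hF
      have e1 : L.map (hadG α) = List.ofFn (cycGeo A α) := by
        rw [hL, List.map_ofFn]
        rfl
      have e2 : (fun k => (L.map (fun X => X k)).prod) = cycProd A := by
        funext k
        rw [hL, List.map_ofFn, cycProd]
        exact congrArg List.prod (congrArg List.ofFn (funext fun l => by
          simp only [Function.comp_apply]
          rw [add_comm]))
      rw [e1, e2] at key
      refine specRad_mono ?_ key
      refine entry_listProd_nonneg _ ?_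
      intro B hB
      obtain ⟨i0, hi0⟩ := ((List.mem_ofFn).1 hB)
      rw [← hi0]
      intro i j
      exact Finset.prod_nonneg fun k _ => Real.rpow_nonneg (hA _ _ _) _
    · -- Part 2
      set σ := ∑ k, α k with hσdef
      have hσ0 : 0 < σ := lt_of_lt_of_le one_pos hsum
      set P0 : Matrix N N ℝ := (List.ofFn A).prod with hP0
      have hP0n : ∀ i j, 0 ≤ P0 i j := by
        refine entry_listProd_nonneg _ ?_
        intro B hB
        obtain ⟨l, hl⟩ := ((List.mem_ofFn).1 hB)
        exact hl ▸ hA _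
      set D : Fin m → Matrix N N ℝ := fun k => ((List.ofFn A).drop k.val).prod with hD
      set T : Fin m → Matrix N N ℝ := fun k => ((List.ofFn A).take k.val).prod with hT
      have hdecomp : ∀ (k : Fin m) (s : ℕ),
          cycProd A k ^ (s + 1) = D k * P0 ^ s * T k := by
        intro k s
        rw [cycProd_decomp A k, pow_succ_rotate, hP0, prod_take_drop A k]
      -- entrywise power bound
      have hCpow : ∀ (s : ℕ) (i j : N), ((hadG α (cycProd A)) ^ (s+1)) i j ≤
          hadG α (fun k => cycProd A k ^ (s+1)) i j := by
        intro s i j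
        have key := hadG_list_le α hα hsum (List.replicate (s+1) (cycProd A))
          (fun X hX => (List.eq_of_mem_replicate hX) ▸ hP)
        have e1 : (List.replicate (s+1) (cycProd A)).map (hadG α) =
            List.replicate (s+1) (hadG α (cycProd A)) := List.map_replicate ..
        have e2 : (fun k => ((List.replicate (s+1) (cycProd A)).map (fun X => X k)).prod) =
            fun k => cycProd A k ^ (s+1) := by
          funext k
          rw [List.map_replicate, List.prod_replicate]
        rw [e1, e2] at key
        have := key i j
        rwa [List.prod_replicate] at this
      -- the key bound for every r > specRad P0
      have keyr : ∀ r : ℝ, specRad P0 < r → specRad (hadG α (cycProd A)) ≤ r ^ σ := by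
        intro r hr
        have hr0 : 0 < r := lt_of_le_of_lt ENNReal.toReal_nonneg hr
        -- eventual geometric bound on ‖P0 ^ s‖
        have gel := spectrum.pow_nnnorm_pow_one_div_tendsto_nhds_spectralRadius
          (P0.map Complex.ofReal)
        have hlt : spectralRadius ℂ (P0.map Complex.ofReal) < ENNReal.ofReal r := by
          rw [ENNReal.lt_ofReal_iff_toReal_lt (spectralRadius_ne_top _)]
          exact hr
        have hev : ∀ᶠ s : ℕ in atTop,
            (‖(P0.map Complex.ofReal) ^ s‖₊ : ENNReal) ^ (1/(s:ℝ)) < ENNReal.ofReal r :=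
          gel.eventually (Filter.Tendsto.eventually_lt_const hlt tendsto_id) |>.mono (fun _ h => h)
        obtain ⟨S, hS⟩ := eventually_atTop.1 hev
        have hbound : ∀ s, max S 1 ≤ s → ‖P0 ^ s‖ ≤ r ^ s := by
          intro s hs
          have hs1 : 1 ≤ s := le_trans (le_max_right _ _) hs
          have hsR : (0:ℝ) < (s:ℝ) := by exact_mod_cast hs1
          have h1 := hS s (le_trans (le_max_left _ _) hs)
          rw [← map_pow_ofReal, nnnorm_map_ofReal] at h1
          have h3 := ENNReal.rpow_le_rpow h1.le (le_of_lt hsR)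
          rw [← ENNReal.rpow_mul, one_div, inv_mul_cancel₀ hsR.ne', ENNReal.rpow_one,
            ENNReal.rpow_natCast] at h3
          have h4 := ENNReal.toReal_mono
            (ENNReal.pow_ne_top ENNReal.ofReal_ne_top) h3
          rwa [ENNReal.coe_toReal, coe_nnnorm, ENNReal.toReal_pow,
            ENNReal.toReal_ofReal hr0.le] at h4
        set Mb : ℝ := 1 + ∑ t ∈ Finset.range (max S 1), ‖P0 ^ t‖ / r ^ t with hMb
        have hMb1 : 1 ≤ Mb :=
          le_add_of_nonneg_right (Finset.sum_nonneg fun t _ =>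
            div_nonneg (norm_nonneg _) (by positivity))
        have hMb0 : 0 < Mb := lt_of_lt_of_le one_pos hMb1
        have hMbound : ∀ s : ℕ, ‖P0 ^ s‖ ≤ Mb * r ^ s := by
          intro s
          rcases le_or_gt (max S 1) s with h | h
          · calc ‖P0 ^ s‖ ≤ r ^ s := hbound s h
              _ ≤ Mb * r ^ s := le_mul_of_one_le_left (by positivity) hMb1
          · have hmem : s ∈ Finset.range (max S 1) := Finset.mem_range.2 h
            have h5 : ‖P0 ^ s‖ / r ^ s ≤ Mb := by
              calc ‖P0 ^ s‖ / r ^ s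
                  ≤ ∑ t ∈ Finset.range (max S 1), ‖P0 ^ t‖ / r ^ t :=
                    Finset.single_le_sum (fun t _ =>
                      div_nonneg (norm_nonneg _) (by positivity)) hmem
                _ ≤ Mb := by rw [hMb]; linarith
            calc ‖P0 ^ s‖ = (‖P0 ^ s‖ / r ^ s) * r ^ s := by field_simp
              _ ≤ Mb * r ^ s := mul_le_mul_of_nonneg_right h5 (by positivity)
        set Kc : ℝ := ∏ k, ((‖D k‖ + 1) * (‖T k‖ + 1)) ^ α k with hKc
        have hKc0 : 0 < Kc := Finset.prod_pos fun k _ =>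
          Real.rpow_pos_of_pos (by positivity) _
        -- the main chain
        have hmain : ∀ s : ℕ, specRad (hadG α (cycProd A)) ≤
            (Kc * (Mb * r ^ s) ^ σ) ^ (1/((s:ℝ)+1)) := by
          intro s
          have hQ0 : 0 < Mb * r ^ s := by positivity
          have hnorm1 : ‖(hadG α (cycProd A)) ^ (s+1)‖ ≤
              ‖hadG α (fun k => cycProd A k ^ (s+1))‖ := by
            refine norm_entry_mono (entry_pow_nonneg hCn _) (hCpow s)
          have hnorm2 : ‖hadG α (fun k => cycProd A k ^ (s+1))‖ ≤
              ∏ k, (((‖D k‖ + 1) * (‖T k‖ + 1)) * (Mb * r ^ s)) ^ α k := by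
            refine norm_hadG_le α hα hsum _
              (fun k => entry_pow_nonneg (hP k) _) (fun k => ?_)
            rw [hdecomp k s]
            calc ‖D k * P0 ^ s * T k‖ ≤ ‖D k‖ * ‖P0 ^ s‖ * ‖T k‖ :=
                  le_trans (norm_mul_le _ _)
                    (mul_le_mul_of_nonneg_right (norm_mul_le _ _) (norm_nonneg _))
              _ ≤ (‖D k‖ + 1) * (Mb * r ^ s) * (‖T k‖ + 1) := by
                  have h1 := hMbound s
                  have h2 : (0:ℝ) ≤ ‖D k‖ := norm_nonneg _
                  have h3 : (0:ℝ) ≤ ‖T k‖ := norm_nonneg _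
                  have h4 : (0:ℝ) ≤ ‖P0 ^ s‖ := norm_nonneg _
                  have h5 : (0:ℝ) ≤ Mb * r ^ s := le_trans h4 h1
                  calc ‖D k‖ * ‖P0 ^ s‖ * ‖T k‖
                      ≤ ‖D k‖ * (Mb * r ^ s) * ‖T k‖ :=
                        mul_le_mul_of_nonneg_right
                          (mul_le_mul_of_nonneg_left h1 h2) h3
                    _ ≤ (‖D k‖ + 1) * (Mb * r ^ s) * (‖T k‖ + 1) :=
                        mul_le_mul
                          (mul_le_mul_of_nonneg_right (by linarith) h5)
                          (by linarith) h3
                          (mul_nonneg (by linarith) h5)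
              _ = ((‖D k‖ + 1) * (‖T k‖ + 1)) * (Mb * r ^ s) := by ring
          have hsplit : ∏ k, (((‖D k‖ + 1) * (‖T k‖ + 1)) * (Mb * r ^ s)) ^ α k =
              Kc * (Mb * r ^ s) ^ σ := by
            rw [hKc, hσdef, ← prod_rpow_const hQ0 α, ← Finset.prod_mul_distrib]
            exact Finset.prod_congr rfl fun k _ =>
              Real.mul_rpow (by positivity) hQ0.le
          calc specRad (hadG α (cycProd A))
              ≤ ‖(hadG α (cycProd A)) ^ (s+1)‖ ^ (1/((s:ℝ)+1)) :=
                specRad_le_norm_pow _ s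
            _ ≤ (Kc * (Mb * r ^ s) ^ σ) ^ (1/((s:ℝ)+1)) := by
                refine Real.rpow_le_rpow (norm_nonneg _) ?_ (by positivity)
                rw [← hsplit]
                exact le_trans hnorm1 hnorm2
        -- the limit
        have hlim : Tendsto (fun s : ℕ => (Kc * (Mb * r ^ s) ^ σ) ^ (1/((s:ℝ)+1)))
            atTop (𝓝 (r ^ σ)) := by
          set a : ℝ := Real.log Kc + σ * Real.log Mb with ha
          set b : ℝ := σ * Real.log r with hb
          have heq : ∀ s : ℕ, (Kc * (Mb * r ^ s) ^ σ) ^ (1/((s:ℝ)+1)) =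
              Real.exp (b + (a - b) * (1/((s:ℝ)+1))) := by
            intro s
            have hQ0 : 0 < Mb * r ^ s := by positivity
            have hX0 : 0 < Kc * (Mb * r ^ s) ^ σ := by positivity
            rw [Real.rpow_def_of_pos hX0, Real.log_mul hKc0.ne' (by positivity),
              Real.log_rpow hQ0, Real.log_mul hMb0.ne' (by positivity),
              Real.log_pow]
            congr 1
            have hs0 : ((s:ℝ)+1) ≠ 0 := by positivity
            field_simp
            ring
          have hlim2 : Tendsto (fun s : ℕ => b + (a - b) * (1/((s:ℝ)+1)))
              atTop (𝓝 b) := by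
            have h1 : Tendsto (fun s : ℕ => (1:ℝ)/((s:ℝ)+1)) atTop (𝓝 0) :=
              tendsto_one_div_add_atTop_nhds_zero_nat
            have := tendsto_const_nhds (x := b) (f := atTop (α := ℕ)) |>.add
              ((tendsto_const_nhds (x := a - b)).mul h1)
            simpa using this
          have hexp : Real.exp b = r ^ σ := by
            rw [Real.rpow_def_of_pos hr0, hb, mul_comm]
          rw [← hexp]
          refine Tendsto.congr (fun s => (heq s).symm) ?_
          exact (Real.continuous_exp.tendsto _).comp hlim2
        exact ge_of_tendsto hlim (Eventually.of_forall hmain)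
      -- conclude by letting r → specRad P0
      have hseq : Tendsto (fun n : ℕ => (specRad P0 + 1/((n:ℝ)+1)) ^ σ) atTop
          (𝓝 (specRad P0 ^ σ)) := by
        have h1 : Tendsto (fun n : ℕ => specRad P0 + 1/((n:ℝ)+1)) atTop
            (𝓝 (specRad P0)) := by
          have := tendsto_const_nhds (x := specRad P0) (f := atTop (α := ℕ)) |>.add
            tendsto_one_div_add_atTop_nhds_zero_nat
          simpa using this
        have hc := Real.continuousAt_rpow_const (specRad P0) σ (Or.inr hσ0.le)
        exact (hc.tendsto.comp h1)
      refine ge_of_tendsto hseq (Eventually.of_forall fun n => ?_)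
      exact keyr _ (by
        have : (0:ℝ) < 1/((n:ℝ)+1) := by positivity
        linarith)

end Main
end

section
/- Let A and B be nonnegative n×n real matrices. Then ‖A^{(1/2)} ∘ B^{(1/2)}‖ ≤ ρ((AᵀA)^{(1/2)} ∘ (BᵀB)^{(1/2)})^{1/2} ≤ ρ((AᵀA BᵀB)^{(1/2)} ∘ (BᵀB AᵀA)^{(1/2)})^{1/4} ≤ ρ(AᵀA BᵀB)^{1/4} = ‖ABᵀ‖^{1/2} ≤ ‖A‖^{1/2}‖B‖^{1/2}. -/
open Matrix

open Filter
open scoped ENNReal NNReal Topology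

set_option linter.unusedSectionVars false

namespace Stmt12Aux

variable {N : Type*} [Fintype N] [DecidableEq N]

noncomputable def cx {N : Type*} (X : Matrix N N ℝ) : Matrix N N ℂ := X.map Complex.ofReal

noncomputable def rho (X : Matrix N N ℝ) : ℝ≥0∞ := spectralRadius ℂ (cx X)

lemma cx_mul (X Y : Matrix N N ℝ) : cx (X * Y) = cx X * cx Y :=
  Matrix.map_mul (L := X) (M := Y) (f := Complex.ofRealHom)

lemma cx_pow (X : Matrix N N ℝ) (k : ℕ) : cx (X ^ k) = cx X ^ k := by
  induction k with
  | zero => simp [cx, Matrix.map_one]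
  | succ n ih => rw [pow_succ, pow_succ, cx_mul, ih]

lemma pow_ent_nonneg {X : Matrix N N ℝ} (hX : ∀ i j, 0 ≤ X i j) (k : ℕ) :
    ∀ i j, 0 ≤ (X ^ k) i j := by
  induction k with
  | zero => intro i j; rw [pow_zero]; rcases eq_or_ne i j with h | h <;>
      simp [Matrix.one_apply, h]
  | succ n ih =>
      intro i j
      rw [pow_succ, Matrix.mul_apply]
      exact Finset.sum_nonneg fun l _ => mul_nonneg (ih i l) (hX l j)

lemma pow_ent_mono {X Y : Matrix N N ℝ} (hX : ∀ i j, 0 ≤ X i j)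
    (hXY : ∀ i j, X i j ≤ Y i j) (k : ℕ) : ∀ i j, (X ^ k) i j ≤ (Y ^ k) i j := by
  have hY : ∀ i j, 0 ≤ Y i j := fun i j => (hX i j).trans (hXY i j)
  induction k with
  | zero => intro i j; rw [pow_zero, pow_zero]
  | succ n ih =>
      intro i j
      rw [pow_succ, pow_succ, Matrix.mul_apply, Matrix.mul_apply]
      exact Finset.sum_le_sum fun l _ =>
        mul_le_mul (ih i l) (hXY l j) (hX l j) (pow_ent_nonneg hY n i l)

section Frobenius

attribute [local instance] Matrix.frobeniusSeminormedAddCommGroup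
  Matrix.frobeniusNormedAddCommGroup Matrix.frobeniusNormedRing Matrix.frobeniusNormedSpace
  Matrix.frobeniusNormedAlgebra

lemma rho_ne_top (X : Matrix N N ℝ) : rho X ≠ ⊤ := by
  have h : rho X ≤ ENNReal.ofReal (‖cx X‖ * ‖(1 : Matrix N N ℂ)‖) := by
    refine iSup₂_le fun k hk => ?_
    have := spectrum.norm_le_norm_mul_of_mem hk
    calc (‖k‖₊ : ℝ≥0∞) = ENNReal.ofReal ‖k‖ := (ofReal_norm k).symm
      _ ≤ _ := ENNReal.ofReal_le_ofReal this
  exact ne_top_of_le_ne_top ENNReal.ofReal_ne_top h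

lemma gelfand (X : Matrix N N ℝ) :
    Tendsto (fun k : ℕ => (‖cx X ^ k‖₊ : ℝ≥0∞) ^ (1 / k : ℝ)) atTop (𝓝 (rho X)) :=
  spectrum.pow_nnnorm_pow_one_div_tendsto_nhds_spectralRadius (cx X)

lemma frob_eq (W : Matrix N N ℝ) : ‖cx W‖ = Real.sqrt (∑ i, ∑ j, W i j ^ 2) := by
  have h1 : ‖cx W‖ = ‖W‖ :=
    Matrix.frobenius_norm_map_eq W Complex.ofReal fun a => Complex.norm_real a
  rw [h1, Matrix.frobenius_norm_def, Real.sqrt_eq_rpow]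
  congr 1
  refine Finset.sum_congr rfl fun i _ => Finset.sum_congr rfl fun j _ => ?_
  rw [Real.norm_eq_abs, Real.rpow_two, sq_abs]

lemma frob_sq_le (X Y Z : Matrix N N ℝ) (hY : ∀ i j, 0 ≤ Y i j) (hZ : ∀ i j, 0 ≤ Z i j)
    (h : ∀ i j, |X i j| ≤ Real.sqrt (Y i j * Z i j)) :
    ‖cx X‖₊ ^ 2 ≤ ‖cx Y‖₊ * ‖cx Z‖₊ := by
  have key : ‖cx X‖ ^ 2 ≤ ‖cx Y‖ * ‖cx Z‖ := by
    rw [frob_eq, frob_eq, frob_eq]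
    rw [Real.sq_sqrt (by positivity)]
    have step1 : (∑ i, ∑ j, X i j ^ 2) ≤ ∑ i, ∑ j, Y i j * Z i j := by
      refine Finset.sum_le_sum fun i _ => Finset.sum_le_sum fun j _ => ?_
      calc X i j ^ 2 = |X i j| ^ 2 := (sq_abs _).symm
        _ ≤ Real.sqrt (Y i j * Z i j) ^ 2 := by
            exact pow_le_pow_left₀ (abs_nonneg _) (h i j) 2
        _ = Y i j * Z i j := Real.sq_sqrt (mul_nonneg (hY i j) (hZ i j))
    have step2 : (∑ i, ∑ j, Y i j * Z i j) ≤
        Real.sqrt (∑ i, ∑ j, Y i j ^ 2) * Real.sqrt (∑ i, ∑ j, Z i j ^ 2) := by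
      have hcs := Finset.sum_sq_le_sum_mul_sum_of_sq_eq_mul (Finset.univ : Finset (N × N))
        (r := fun p => Y p.1 p.2 * Z p.1 p.2) (f := fun p => Y p.1 p.2 ^ 2)
        (g := fun p => Z p.1 p.2 ^ 2) (fun p _ => sq_nonneg _) (fun p _ => sq_nonneg _)
        (fun p _ => by ring)
      simp only [Fintype.sum_prod_type] at hcs
      have hnn : 0 ≤ ∑ i, ∑ j, Y i j * Z i j :=
        Finset.sum_nonneg fun i _ => Finset.sum_nonneg fun j _ =>
          mul_nonneg (hY i j) (hZ i j)
      rw [← Real.sqrt_mul (by positivity), ← Real.sqrt_sq hnn]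
      exact Real.sqrt_le_sqrt hcs
    exact step1.trans step2
  have := key
  rw [← NNReal.coe_le_coe]
  push_cast
  simpa [coe_nnnorm] using key

lemma seq_bound (X Y Z : Matrix N N ℝ) (hY : ∀ i j, 0 ≤ Y i j) (hZ : ∀ i j, 0 ≤ Z i j)
    (h : ∀ (k : ℕ) i j, |(X ^ k) i j| ≤ Real.sqrt ((Y ^ k) i j * (Z ^ k) i j)) (k : ℕ) :
    (‖cx X ^ k‖₊ : ℝ≥0∞) ^ (1 / k : ℝ) ≤
      ((‖cx Y ^ k‖₊ : ℝ≥0∞) ^ (1 / k : ℝ)) ^ (1 / 2 : ℝ) *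
        ((‖cx Z ^ k‖₊ : ℝ≥0∞) ^ (1 / k : ℝ)) ^ (1 / 2 : ℝ) := by
  have h2 : ‖cx (X ^ k)‖₊ ^ 2 ≤ ‖cx (Y ^ k)‖₊ * ‖cx (Z ^ k)‖₊ :=
    frob_sq_le _ _ _ (pow_ent_nonneg hY k) (pow_ent_nonneg hZ k) (h k)
  rw [← cx_pow, ← cx_pow, ← cx_pow]
  have h2' : (‖cx (X ^ k)‖₊ : ℝ≥0∞) ^ (2 : ℝ) ≤
      (‖cx (Y ^ k)‖₊ : ℝ≥0∞) * (‖cx (Z ^ k)‖₊ : ℝ≥0∞) := by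
    rw [show ((2 : ℝ)) = ((2 : ℕ) : ℝ) by norm_num, ENNReal.rpow_natCast]
    exact_mod_cast h2
  set a := (‖cx (X ^ k)‖₊ : ℝ≥0∞) with ha
  set b := (‖cx (Y ^ k)‖₊ : ℝ≥0∞) with hb
  set c := (‖cx (Z ^ k)‖₊ : ℝ≥0∞) with hc
  have e1 : (1 / k : ℝ) = 2 * (1 / (2 * k) : ℝ) := by
    rcases Nat.eq_zero_or_pos k with hk | hk
    · simp [hk]
    · have : (k : ℝ) ≠ 0 := Nat.cast_ne_zero.mpr hk.ne'
      field_simp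
  have e2 : ∀ x : ℝ≥0∞, (x ^ (1 / k : ℝ)) ^ (1 / 2 : ℝ) = x ^ (1 / (2 * k) : ℝ) := by
    intro x
    rw [← ENNReal.rpow_mul]
    congr 1
    rcases Nat.eq_zero_or_pos k with hk | hk
    · simp [hk]
    · have : (k : ℝ) ≠ 0 := Nat.cast_ne_zero.mpr hk.ne'
      field_simp
  rw [e2 b, e2 c, e1, ENNReal.rpow_mul,
    ← ENNReal.mul_rpow_of_nonneg _ _ (by positivity)]
  exact ENNReal.rpow_le_rpow h2' (by positivity)

lemma rho_le_sqrt_mul (X Y Z : Matrix N N ℝ) (hY : ∀ i j, 0 ≤ Y i j) (hZ : ∀ i j, 0 ≤ Z i j)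
    (h : ∀ (k : ℕ) i j, |(X ^ k) i j| ≤ Real.sqrt ((Y ^ k) i j * (Z ^ k) i j)) :
    rho X ≤ rho Y ^ (1 / 2 : ℝ) * rho Z ^ (1 / 2 : ℝ) := by
  have t1 := gelfand X
  have t2 := (gelfand Y).ennrpow_const (1 / 2 : ℝ)
  have t3 := (gelfand Z).ennrpow_const (1 / 2 : ℝ)
  have hbt : rho Y ^ (1 / 2 : ℝ) ≠ ⊤ :=
    ENNReal.rpow_ne_top_of_nonneg (by norm_num) (rho_ne_top Y)
  have hct : rho Z ^ (1 / 2 : ℝ) ≠ ⊤ :=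
    ENNReal.rpow_ne_top_of_nonneg (by norm_num) (rho_ne_top Z)
  have tmul := ENNReal.Tendsto.mul t2 (Or.inr hct) t3 (Or.inr hbt)
  exact le_of_tendsto_of_tendsto' t1 tmul (seq_bound X Y Z hY hZ h)

lemma rho_mono {X Y : Matrix N N ℝ} (hX : ∀ i j, 0 ≤ X i j)
    (hXY : ∀ i j, X i j ≤ Y i j) : rho X ≤ rho Y := by
  have hY : ∀ i j, 0 ≤ Y i j := fun i j => (hX i j).trans (hXY i j)
  have h := rho_le_sqrt_mul X Y Y hY hY ?_
  · rcases eq_or_ne (rho Y) 0 with h0 | h0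
    · simpa [h0] using h
    · calc rho X ≤ rho Y ^ (1 / 2 : ℝ) * rho Y ^ (1 / 2 : ℝ) := h
        _ = rho Y ^ (1 / 2 + 1 / 2 : ℝ) := (ENNReal.rpow_add _ _ h0 (rho_ne_top Y)).symm
        _ = rho Y := by norm_num
  · intro k i j
    rw [abs_of_nonneg (pow_ent_nonneg hX k i j),
      Real.sqrt_mul_self (pow_ent_nonneg hY k i j)]
    exact pow_ent_mono hX hXY k i j

lemma hadamard_pow_bound {Y Z M : Matrix N N ℝ} (hY : ∀ i j, 0 ≤ Y i j)
    (hZ : ∀ i j, 0 ≤ Z i j) (hM : ∀ i j, M i j = Real.sqrt (Y i j * Z i j)) (k : ℕ) : ∀ i j,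
    (M ^ k) i j ≤ Real.sqrt ((Y ^ k) i j * (Z ^ k) i j) := by
  induction k with
  | zero =>
      intro i j
      rw [pow_zero, pow_zero, pow_zero]
      rcases eq_or_ne i j with h | h
      · simp [Matrix.one_apply, h]
      · simp [Matrix.one_apply, h]
  | succ n ih =>
      intro i j
      rw [pow_succ, pow_succ, pow_succ, Matrix.mul_apply, Matrix.mul_apply, Matrix.mul_apply]
      have step1 : ∑ l, (M ^ n) i l * M l j ≤
          ∑ l, Real.sqrt ((Y ^ n) i l * (Z ^ n) i l) * Real.sqrt (Y l j * Z l j) := by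
        refine Finset.sum_le_sum fun l _ => ?_
        rw [hM l j]
        exact mul_le_mul_of_nonneg_right (ih i l) (Real.sqrt_nonneg _)
      have step2 : ∑ l, Real.sqrt ((Y ^ n) i l * (Z ^ n) i l) * Real.sqrt (Y l j * Z l j) =
          ∑ l, Real.sqrt (((Y ^ n) i l * Y l j) * ((Z ^ n) i l * Z l j)) := by
        refine Finset.sum_congr rfl fun l _ => ?_
        rw [← Real.sqrt_mul (mul_nonneg (pow_ent_nonneg hY n i l) (pow_ent_nonneg hZ n i l))]
        congr 1
        ring
      have step3 : ∑ l, Real.sqrt (((Y ^ n) i l * Y l j) * ((Z ^ n) i l * Z l j)) ≤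
          Real.sqrt ((∑ l, (Y ^ n) i l * Y l j) * (∑ l, (Z ^ n) i l * Z l j)) := by
        have hcs := Finset.sum_sq_le_sum_mul_sum_of_sq_eq_mul (Finset.univ : Finset N)
          (r := fun l => Real.sqrt (((Y ^ n) i l * Y l j) * ((Z ^ n) i l * Z l j)))
          (f := fun l => (Y ^ n) i l * Y l j) (g := fun l => (Z ^ n) i l * Z l j)
          (fun l _ => mul_nonneg (pow_ent_nonneg hY n i l) (hY l j))
          (fun l _ => mul_nonneg (pow_ent_nonneg hZ n i l) (hZ l j))
          (fun l _ => Real.sq_sqrt (mul_nonneg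
            (mul_nonneg (pow_ent_nonneg hY n i l) (hY l j))
            (mul_nonneg (pow_ent_nonneg hZ n i l) (hZ l j))))
        have hnn : 0 ≤ ∑ l, Real.sqrt (((Y ^ n) i l * Y l j) * ((Z ^ n) i l * Z l j)) :=
          Finset.sum_nonneg fun l _ => Real.sqrt_nonneg _
        rw [← Real.sqrt_sq hnn]
        exact Real.sqrt_le_sqrt hcs
      exact (step1.trans_eq step2).trans step3

lemma rho_hadamard {Y Z M : Matrix N N ℝ} (hY : ∀ i j, 0 ≤ Y i j) (hZ : ∀ i j, 0 ≤ Z i j)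
    (hM : ∀ i j, M i j = Real.sqrt (Y i j * Z i j)) :
    rho M ≤ rho Y ^ (1 / 2 : ℝ) * rho Z ^ (1 / 2 : ℝ) := by
  refine rho_le_sqrt_mul M Y Z hY hZ fun k i j => ?_
  have hMnn : ∀ i j, 0 ≤ M i j := fun i j => (hM i j).symm ▸ Real.sqrt_nonneg _
  rw [abs_of_nonneg (pow_ent_nonneg hMnn k i j)]
  exact hadamard_pow_bound hY hZ hM k i j

lemma rho_sq (X : Matrix N N ℝ) : rho (X * X) = rho X ^ (2 : ℝ) := by
  have htwo : Tendsto (fun k : ℕ => 2 * k) atTop atTop :=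
    tendsto_atTop_atTop_of_monotone (fun a b h => by omega) (fun b => ⟨b, by omega⟩)
  have t2 : Tendsto (fun k : ℕ => (‖cx X ^ (2 * k)‖₊ : ℝ≥0∞) ^ (1 / (2 * k : ℕ) : ℝ)) atTop
      (𝓝 (rho X)) := (gelfand X).comp htwo
  have t3 := t2.ennrpow_const (2 : ℝ)
  have heq : ∀ k : ℕ, ((‖cx X ^ (2 * k)‖₊ : ℝ≥0∞) ^ (1 / (2 * k : ℕ) : ℝ)) ^ (2 : ℝ) =
      (‖cx (X * X) ^ k‖₊ : ℝ≥0∞) ^ (1 / k : ℝ) := by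
    intro k
    have hx : cx (X * X) ^ k = cx X ^ (2 * k) := by
      rw [cx_mul, ← sq, ← pow_mul]
    rw [hx, ← ENNReal.rpow_mul]
    congr 1
    rcases Nat.eq_zero_or_pos k with hk | hk
    · simp [hk]
    · have : (k : ℝ) ≠ 0 := Nat.cast_ne_zero.mpr hk.ne'
      push_cast
      field_simp
  rw [funext heq] at t3
  exact tendsto_nhds_unique (gelfand (X * X)) t3

end Frobenius

lemma iSup_nnnorm_sub (S T : Set ℂ) (h : S \ {0} ⊆ T) :
    (⨆ k ∈ S, (‖k‖₊ : ℝ≥0∞)) ≤ ⨆ k ∈ T, (‖k‖₊ : ℝ≥0∞) := by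
  refine iSup₂_le fun k hk => ?_
  rcases eq_or_ne k 0 with rfl | hk0
  · simp
  · exact le_iSup₂_of_le k (h ⟨hk, hk0⟩) le_rfl

lemma rho_def (X : Matrix N N ℝ) : rho X = ⨆ k ∈ spectrum ℂ (cx X), (‖k‖₊ : ℝ≥0∞) := rfl

lemma rho_comm (P Q : Matrix N N ℝ) : rho (P * Q) = rho (Q * P) := by
  have h := spectrum.nonzero_mul_comm (𝕜 := ℂ) (cx P) (cx Q)
  rw [rho_def, rho_def, cx_mul, cx_mul]
  refine le_antisymm (iSup_nnnorm_sub _ _ ?_) (iSup_nnnorm_sub _ _ ?_)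
  · exact h.le.trans Set.diff_subset
  · exact h.ge.trans Set.diff_subset

section L2

lemma cx_l2_norm (X : Matrix N N ℝ) :
    ‖toEuclideanCLM (𝕜 := ℂ) (cx X)‖ = ‖toEuclideanCLM (𝕜 := ℝ) X‖ := by
  set T := toEuclideanCLM (𝕜 := ℝ) X with hT
  set Tc := toEuclideanCLM (𝕜 := ℂ) (cx X) with hTc
  have happ : ∀ (z : EuclideanSpace ℂ N) (i : N), Tc z i = ∑ j, (X i j : ℂ) * z j := by
    intro z i
    rfl
  have happR : ∀ (u : EuclideanSpace ℝ N) (i : N), T u i = ∑ j, X i j * u j := by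
    intro u i
    rfl
  have normsq : ∀ {𝕜 : Type} [RCLike 𝕜] (x : EuclideanSpace 𝕜 N),
      ‖x‖ ^ 2 = ∑ i, ‖x i‖ ^ 2 := by
    intro 𝕜 _ x
    rw [EuclideanSpace.norm_eq, Real.sq_sqrt]
    exact Finset.sum_nonneg fun i _ => sq_nonneg _
  refine le_antisymm ?_ ?_
  · refine ContinuousLinearMap.opNorm_le_bound _ (norm_nonneg T) fun z => ?_
    set u : EuclideanSpace ℝ N := (WithLp.equiv 2 _).symm fun i => (z i).re with hu
    set v : EuclideanSpace ℝ N := (WithLp.equiv 2 _).symm fun i => (z i).im with hv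
    have hui : ∀ i, u i = (z i).re := fun i => rfl
    have hvi : ∀ i, v i = (z i).im := fun i => rfl
    have h1 : ‖Tc z‖ ^ 2 = ‖T u‖ ^ 2 + ‖T v‖ ^ 2 := by
      rw [normsq, normsq, normsq, ← Finset.sum_add_distrib]
      refine Finset.sum_congr rfl fun i _ => ?_
      rw [happ]
      have hre : (∑ j, (X i j : ℂ) * z j).re = ∑ j, X i j * (z j).re := by
        rw [Complex.re_sum]
        exact Finset.sum_congr rfl fun j _ => Complex.re_ofReal_mul _ _
      have him : (∑ j, (X i j : ℂ) * z j).im = ∑ j, X i j * (z j).im := by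
        rw [Complex.im_sum]
        exact Finset.sum_congr rfl fun j _ => Complex.im_ofReal_mul _ _
      rw [Complex.sq_norm, Complex.normSq_apply, hre, him,
        happR, happR]
      simp only [hui, hvi, Real.norm_eq_abs, sq_abs]
      ring
    have h2 : ‖z‖ ^ 2 = ‖u‖ ^ 2 + ‖v‖ ^ 2 := by
      rw [normsq, normsq, normsq, ← Finset.sum_add_distrib]
      refine Finset.sum_congr rfl fun i _ => ?_
      rw [Complex.sq_norm, Complex.normSq_apply]
      simp only [hui, hvi, Real.norm_eq_abs, sq_abs]
      ring
    have h3 : ‖T u‖ ^ 2 ≤ (‖T‖ * ‖u‖) ^ 2 :=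
      pow_le_pow_left₀ (norm_nonneg _) (T.le_opNorm u) 2
    have h4 : ‖T v‖ ^ 2 ≤ (‖T‖ * ‖v‖) ^ 2 :=
      pow_le_pow_left₀ (norm_nonneg _) (T.le_opNorm v) 2
    have key : ‖Tc z‖ ^ 2 ≤ (‖T‖ * ‖z‖) ^ 2 := by
      calc ‖Tc z‖ ^ 2 = ‖T u‖ ^ 2 + ‖T v‖ ^ 2 := h1
        _ ≤ (‖T‖ * ‖u‖) ^ 2 + (‖T‖ * ‖v‖) ^ 2 := add_le_add h3 h4
        _ = ‖T‖ ^ 2 * (‖u‖ ^ 2 + ‖v‖ ^ 2) := by ring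
        _ = ‖T‖ ^ 2 * ‖z‖ ^ 2 := by rw [← h2]
        _ = (‖T‖ * ‖z‖) ^ 2 := by ring
    have := Real.sqrt_le_sqrt key
    rwa [Real.sqrt_sq (norm_nonneg _),
      Real.sqrt_sq (mul_nonneg (norm_nonneg _) (norm_nonneg _))] at this
  · refine ContinuousLinearMap.opNorm_le_bound _ (norm_nonneg Tc) fun w => ?_
    set wc : EuclideanSpace ℂ N := (WithLp.equiv 2 _).symm fun i => ((w i : ℝ) : ℂ) with hwc
    have hwi : ∀ i, wc i = ((w i : ℝ) : ℂ) := fun i => rfl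
    have e : ∀ i, Tc wc i = ((T w i : ℝ) : ℂ) := by
      intro i
      rw [happ, happR]
      push_cast
      exact Finset.sum_congr rfl fun j _ => by rw [hwi]
    have hn : ‖Tc wc‖ = ‖T w‖ := by
      have h1 : ‖Tc wc‖ ^ 2 = ‖T w‖ ^ 2 := by
        rw [normsq, normsq]
        refine Finset.sum_congr rfl fun i _ => ?_
        rw [e, Complex.norm_real]
      have := congrArg Real.sqrt h1
      rwa [Real.sqrt_sq (norm_nonneg _), Real.sqrt_sq (norm_nonneg _)] at this
    have hnu : ‖wc‖ = ‖w‖ := by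
      have h1 : ‖wc‖ ^ 2 = ‖w‖ ^ 2 := by
        rw [normsq, normsq]
        refine Finset.sum_congr rfl fun i _ => ?_
        rw [hwi, Complex.norm_real]
      have := congrArg Real.sqrt h1
      rwa [Real.sqrt_sq (norm_nonneg _), Real.sqrt_sq (norm_nonneg _)] at this
    calc ‖T w‖ = ‖Tc wc‖ := hn.symm
      _ ≤ ‖Tc‖ * ‖wc‖ := Tc.le_opNorm wc
      _ = ‖Tc‖ * ‖w‖ := by rw [hnu]

lemma specRad_def (X : Matrix N N ℝ) : specRad X = (rho X).toReal := rfl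

lemma specRad_nonneg (X : Matrix N N ℝ) : 0 ≤ specRad X := ENNReal.toReal_nonneg

lemma specRad_mono {X Y : Matrix N N ℝ} (hX : ∀ i j, 0 ≤ X i j)
    (hXY : ∀ i j, X i j ≤ Y i j) : specRad X ≤ specRad Y :=
  ENNReal.toReal_mono (rho_ne_top Y) (rho_mono hX hXY)

lemma rho_clm (X : Matrix N N ℝ) :
    rho X = spectralRadius ℂ (toEuclideanCLM (𝕜 := ℂ) (cx X)) := by
  have h : spectrum ℂ (toEuclideanCLM (𝕜 := ℂ) (cx X)) = spectrum ℂ (cx X) :=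
    AlgEquiv.spectrum_eq _ _
  rw [rho_def]
  show _ = ⨆ k ∈ spectrum ℂ (toEuclideanCLM (𝕜 := ℂ) (cx X)), (‖k‖₊ : ℝ≥0∞)
  rw [h]

lemma star_cx_of_symm {S : Matrix N N ℝ} (hS : Sᵀ = S) : star (cx S) = cx S := by
  rw [Matrix.star_eq_conjTranspose]
  ext i j
  rw [Matrix.conjTranspose_apply]
  show star ((S j i : ℝ) : ℂ) = ((S i j : ℝ) : ℂ)
  rw [Complex.star_def, Complex.conj_ofReal]
  norm_cast
  calc S j i = Sᵀ i j := rfl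
    _ = S i j := by rw [hS]

lemma specRad_symm {S : Matrix N N ℝ} (hS : Sᵀ = S) : specRad S = l2OpNorm S := by
  set T := toEuclideanCLM (𝕜 := ℂ) (cx S) with hT
  have hsa : IsSelfAdjoint T := by
    show star T = T
    rw [hT, ← map_star, star_cx_of_symm hS]
  have h : spectralRadius ℂ T = ‖T‖₊ := hsa.spectralRadius_eq_nnnorm
  rw [specRad_def, rho_clm, h, ENNReal.coe_toReal, coe_nnnorm, l2OpNorm, cx_l2_norm]

lemma l2_mul_le (P Q : Matrix N N ℝ) : l2OpNorm (P * Q) ≤ l2OpNorm P * l2OpNorm Q := by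
  unfold l2OpNorm
  rw [_root_.map_mul]
  exact norm_mul_le _ _

lemma star_eq_transpose (P : Matrix N N ℝ) : star P = Pᵀ := by
  rw [Matrix.star_eq_conjTranspose, Matrix.conjTranspose_eq_transpose_of_trivial]

set_option synthInstance.maxHeartbeats 400000 in
set_option maxHeartbeats 1000000 in
lemma l2_transpose (P : Matrix N N ℝ) : l2OpNorm Pᵀ = l2OpNorm P := by
  have h1 : toEuclideanCLM (𝕜 := ℝ) Pᵀ = star (toEuclideanCLM (𝕜 := ℝ) P) := by
    rw [← star_eq_transpose P]
    exact map_star _ _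
  rw [l2OpNorm, l2OpNorm, h1, ContinuousLinearMap.star_eq_adjoint]
  exact (ContinuousLinearMap.adjoint : (EuclideanSpace ℝ N →L[ℝ] EuclideanSpace ℝ N) ≃ₗᵢ⋆[ℝ] _).norm_map _

set_option synthInstance.maxHeartbeats 400000 in
set_option maxHeartbeats 1000000 in
lemma l2_conj_mul (M : Matrix N N ℝ) : l2OpNorm (Mᵀ * M) = l2OpNorm M * l2OpNorm M := by
  have h1 : toEuclideanCLM (𝕜 := ℝ) (Mᵀ * M) =
      star (toEuclideanCLM (𝕜 := ℝ) M) * toEuclideanCLM (𝕜 := ℝ) M := by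
    rw [_root_.map_mul, ← star_eq_transpose M]
    congr 1
    exact map_star _ _
  rw [l2OpNorm, l2OpNorm, h1, ContinuousLinearMap.star_eq_adjoint]
  exact ContinuousLinearMap.norm_adjoint_comp_self _

lemma l2_nonneg (M : Matrix N N ℝ) : 0 ≤ l2OpNorm M := norm_nonneg _

end L2

lemma mul_ent_nonneg {X Y : Matrix N N ℝ} (hX : ∀ i j, 0 ≤ X i j)
    (hY : ∀ i j, 0 ≤ Y i j) : ∀ i j, 0 ≤ (X * Y) i j := fun i j => by
  rw [Matrix.mul_apply]
  exact Finset.sum_nonneg fun l _ => mul_nonneg (hX i l) (hY l j)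

lemma sum_sqrt_mul_le (f g : N → ℝ) (hf : ∀ l, 0 ≤ f l) (hg : ∀ l, 0 ≤ g l) :
    ∑ l, Real.sqrt (f l * g l) ≤ Real.sqrt (∑ l, f l) * Real.sqrt (∑ l, g l) := by
  have hcs := Finset.sum_sq_le_sum_mul_sum_of_sq_eq_mul (Finset.univ : Finset N)
    (r := fun l => Real.sqrt (f l * g l)) (f := f) (g := g)
    (fun l _ => hf l) (fun l _ => hg l)
    (fun l _ => Real.sq_sqrt (mul_nonneg (hf l) (hg l)))
  have hnn : 0 ≤ ∑ l, Real.sqrt (f l * g l) :=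
    Finset.sum_nonneg fun l _ => Real.sqrt_nonneg _
  rw [← Real.sqrt_mul (Finset.sum_nonneg fun l _ => hf l), ← Real.sqrt_sq hnn]
  exact Real.sqrt_le_sqrt hcs

lemma had_entry {X Y : Matrix N N ℝ} (hX : ∀ i j, 0 ≤ X i j) (i j : N) :
    (hadPow X (1/2) ⊙ hadPow Y (1/2)) i j = Real.sqrt (X i j * Y i j) := by
  rw [Matrix.hadamard_apply]
  show X i j ^ (1/2 : ℝ) * Y i j ^ (1/2 : ℝ) = _
  rw [Real.sqrt_mul (hX i j), Real.sqrt_eq_rpow, Real.sqrt_eq_rpow]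

end Stmt12Aux

open Stmt12Aux

theorem stmt12 {N : Type*} [Fintype N] [DecidableEq N] (A B : Matrix N N ℝ)
    (hA : ∀ i j, 0 ≤ A i j) (hB : ∀ i j, 0 ≤ B i j) :
    l2OpNorm (hadPow A (1/2) ⊙ hadPow B (1/2)) ≤
        specRad (hadPow (Aᵀ * A) (1/2) ⊙ hadPow (Bᵀ * B) (1/2)) ^ ((1 : ℝ) / 2) ∧
      specRad (hadPow (Aᵀ * A) (1/2) ⊙ hadPow (Bᵀ * B) (1/2)) ^ ((1 : ℝ) / 2) ≤
        specRad (hadPow (Aᵀ * A * (Bᵀ * B)) (1/2) ⊙ hadPow (Bᵀ * B * (Aᵀ * A)) (1/2)) ^ ((1 : ℝ) / 4) ∧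
      specRad (hadPow (Aᵀ * A * (Bᵀ * B)) (1/2) ⊙ hadPow (Bᵀ * B * (Aᵀ * A)) (1/2)) ^ ((1 : ℝ) / 4) ≤
        specRad (Aᵀ * A * (Bᵀ * B)) ^ ((1 : ℝ) / 4) ∧
      specRad (Aᵀ * A * (Bᵀ * B)) ^ ((1 : ℝ) / 4) = l2OpNorm (A * Bᵀ) ^ ((1 : ℝ) / 2) ∧
      l2OpNorm (A * Bᵀ) ^ ((1 : ℝ) / 2) ≤ l2OpNorm A ^ ((1 : ℝ) / 2) * l2OpNorm B ^ ((1 : ℝ) / 2) := by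
  have hAt : ∀ i j, 0 ≤ Aᵀ i j := fun i j => hA j i
  have hBt : ∀ i j, 0 ≤ Bᵀ i j := fun i j => hB j i
  have hC : ∀ i j, 0 ≤ (Aᵀ * A) i j := mul_ent_nonneg hAt hA
  have hD : ∀ i j, 0 ≤ (Bᵀ * B) i j := mul_ent_nonneg hBt hB
  have hCD : ∀ i j, 0 ≤ (Aᵀ * A * (Bᵀ * B)) i j := mul_ent_nonneg hC hD
  have hDC : ∀ i j, 0 ≤ (Bᵀ * B * (Aᵀ * A)) i j := mul_ent_nonneg hD hC
  set G := hadPow A (1/2) ⊙ hadPow B (1/2) with hGdef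
  set R := hadPow (Aᵀ * A) (1/2) ⊙ hadPow (Bᵀ * B) (1/2) with hRdef
  set S := hadPow (Aᵀ * A * (Bᵀ * B)) (1/2) ⊙ hadPow (Bᵀ * B * (Aᵀ * A)) (1/2) with hSdef
  have hG : ∀ i j, 0 ≤ G i j := fun i j => by
    rw [hGdef, had_entry hA]; exact Real.sqrt_nonneg _
  have hGt : ∀ i j, 0 ≤ Gᵀ i j := fun i j => hG j i
  have hR : ∀ i j, 0 ≤ R i j := fun i j => by
    rw [hRdef, had_entry hC]; exact Real.sqrt_nonneg _
  -- Part 1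
  have part1 : l2OpNorm G ≤ specRad R ^ ((1 : ℝ) / 2) := by
    have hCij : ∀ i j, (Aᵀ * A) i j = ∑ k, A k i * A k j := fun i j => by
      rw [Matrix.mul_apply]
      exact Finset.sum_congr rfl fun k _ => by rw [Matrix.transpose_apply]
    have hDij : ∀ i j, (Bᵀ * B) i j = ∑ k, B k i * B k j := fun i j => by
      rw [Matrix.mul_apply]
      exact Finset.sum_congr rfl fun k _ => by rw [Matrix.transpose_apply]
    have hent : ∀ i j, (Gᵀ * G) i j ≤ R i j := by
      intro i j
      rw [hRdef, had_entry hC, Matrix.mul_apply]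
      have hterm : ∀ k, Gᵀ i k * G k j =
          Real.sqrt ((A k i * A k j) * (B k i * B k j)) := by
        intro k
        rw [Matrix.transpose_apply, hGdef, had_entry hA, had_entry hA,
          ← Real.sqrt_mul (mul_nonneg (hA k i) (hB k i))]
        congr 1
        ring
      calc ∑ k, Gᵀ i k * G k j
          = ∑ k, Real.sqrt ((A k i * A k j) * (B k i * B k j)) :=
            Finset.sum_congr rfl fun k _ => hterm k
        _ ≤ Real.sqrt (∑ k, A k i * A k j) * Real.sqrt (∑ k, B k i * B k j) :=
            sum_sqrt_mul_le _ _ (fun k => mul_nonneg (hA k i) (hA k j))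
              (fun k => mul_nonneg (hB k i) (hB k j))
        _ = Real.sqrt ((Aᵀ * A) i j) * Real.sqrt ((Bᵀ * B) i j) := by
            rw [hCij, hDij]
        _ = Real.sqrt ((Aᵀ * A) i j * (Bᵀ * B) i j) :=
            (Real.sqrt_mul (hC i j) _).symm
    have hsym : (Gᵀ * G)ᵀ = Gᵀ * G := by
      rw [Matrix.transpose_mul, Matrix.transpose_transpose]
    have h1 : specRad (Gᵀ * G) = l2OpNorm G * l2OpNorm G := by
      rw [specRad_symm hsym, l2_conj_mul]
    have h3 : specRad (Gᵀ * G) ≤ specRad R :=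
      specRad_mono (mul_ent_nonneg hGt hG) hent
    rw [h1] at h3
    have := Real.sqrt_le_sqrt h3
    rwa [Real.sqrt_mul_self (l2_nonneg G), Real.sqrt_eq_rpow] at this
  -- Part 2
  have part2 : specRad R ^ ((1 : ℝ) / 2) ≤ specRad S ^ ((1 : ℝ) / 4) := by
    have hent : ∀ i j, (R * R) i j ≤ S i j := by
      intro i j
      rw [hSdef, had_entry hCD, Matrix.mul_apply]
      have hterm : ∀ k, R i k * R k j =
          Real.sqrt (((Aᵀ * A) i k * (Bᵀ * B) k j) * ((Bᵀ * B) i k * (Aᵀ * A) k j)) := by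
        intro k
        rw [hRdef, had_entry hC, had_entry hC,
          ← Real.sqrt_mul (mul_nonneg (hC i k) (hD i k))]
        congr 1
        ring
      calc ∑ k, R i k * R k j
          = ∑ k, Real.sqrt (((Aᵀ * A) i k * (Bᵀ * B) k j) *
              ((Bᵀ * B) i k * (Aᵀ * A) k j)) := Finset.sum_congr rfl fun k _ => hterm k
        _ ≤ Real.sqrt (∑ k, (Aᵀ * A) i k * (Bᵀ * B) k j) *
              Real.sqrt (∑ k, (Bᵀ * B) i k * (Aᵀ * A) k j) :=
            sum_sqrt_mul_le _ _ (fun k => mul_nonneg (hC i k) (hD k j))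
              (fun k => mul_nonneg (hD i k) (hC k j))
        _ = Real.sqrt ((Aᵀ * A * (Bᵀ * B)) i j) * Real.sqrt ((Bᵀ * B * (Aᵀ * A)) i j) := by
            rw [Matrix.mul_apply, Matrix.mul_apply]
        _ = Real.sqrt ((Aᵀ * A * (Bᵀ * B)) i j * (Bᵀ * B * (Aᵀ * A)) i j) :=
            (Real.sqrt_mul (hCD i j) _).symm
    have hmono : rho (R * R) ≤ rho S := rho_mono (mul_ent_nonneg hR hR) hent
    rw [rho_sq R] at hmono
    have key : rho R ^ ((1 : ℝ) / 2) ≤ rho S ^ ((1 : ℝ) / 4) := by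
      have h1 : rho R = (rho R ^ (2 : ℝ)) ^ ((1 : ℝ) / 2) := by
        rw [← ENNReal.rpow_mul]; norm_num
      have h2 : rho R ≤ rho S ^ ((1 : ℝ) / 2) := by
        rw [h1]
        exact ENNReal.rpow_le_rpow hmono (by norm_num)
      calc rho R ^ ((1 : ℝ) / 2) ≤ (rho S ^ ((1 : ℝ) / 2)) ^ ((1 : ℝ) / 2) :=
            ENNReal.rpow_le_rpow h2 (by norm_num)
        _ = rho S ^ ((1 : ℝ) / 4) := by rw [← ENNReal.rpow_mul]; norm_num
    rw [specRad_def, specRad_def, ENNReal.toReal_rpow, ENNReal.toReal_rpow]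
    exact ENNReal.toReal_mono
      (ENNReal.rpow_ne_top_of_nonneg (by norm_num) (rho_ne_top S)) key
  -- Part 3
  have part3 : specRad S ^ ((1 : ℝ) / 4) ≤ specRad (Aᵀ * A * (Bᵀ * B)) ^ ((1 : ℝ) / 4) := by
    have hSent : ∀ i j, S i j =
        Real.sqrt ((Aᵀ * A * (Bᵀ * B)) i j * (Bᵀ * B * (Aᵀ * A)) i j) := fun i j => by
      rw [hSdef, had_entry hCD]
    have h := rho_hadamard hCD hDC hSent
    rw [rho_comm (Bᵀ * B) (Aᵀ * A),
      ← ENNReal.rpow_add_of_nonneg _ _ (by norm_num) (by norm_num)] at h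
    norm_num at h
    have key : rho S ^ ((1 : ℝ) / 4) ≤ rho (Aᵀ * A * (Bᵀ * B)) ^ ((1 : ℝ) / 4) :=
      ENNReal.rpow_le_rpow h (by norm_num)
    rw [specRad_def, specRad_def, ENNReal.toReal_rpow, ENNReal.toReal_rpow]
    exact ENNReal.toReal_mono
      (ENNReal.rpow_ne_top_of_nonneg (by norm_num) (rho_ne_top _)) key
  -- Part 4
  have part4 : specRad (Aᵀ * A * (Bᵀ * B)) ^ ((1 : ℝ) / 4) =
      l2OpNorm (A * Bᵀ) ^ ((1 : ℝ) / 2) := by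
    have e1 : rho (Aᵀ * A * (Bᵀ * B)) = rho ((A * Bᵀ)ᵀ * (A * Bᵀ)) := by
      have h1 : Aᵀ * A * (Bᵀ * B) = (Aᵀ * A * Bᵀ) * B := by
        rw [Matrix.mul_assoc (Aᵀ * A)]
      have h2 : B * (Aᵀ * A * Bᵀ) = (A * Bᵀ)ᵀ * (A * Bᵀ) := by
        rw [Matrix.transpose_mul, Matrix.transpose_transpose]
        simp only [Matrix.mul_assoc]
      rw [h1, rho_comm, h2]
    have hsym : ((A * Bᵀ)ᵀ * (A * Bᵀ))ᵀ = (A * Bᵀ)ᵀ * (A * Bᵀ) := by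
      rw [Matrix.transpose_mul, Matrix.transpose_transpose]
    have e2 : specRad (Aᵀ * A * (Bᵀ * B)) = l2OpNorm (A * Bᵀ) * l2OpNorm (A * Bᵀ) := by
      rw [specRad_def, e1, ← specRad_def, specRad_symm hsym, l2_conj_mul]
    rw [e2, show l2OpNorm (A * Bᵀ) * l2OpNorm (A * Bᵀ) = l2OpNorm (A * Bᵀ) ^ (2 : ℝ) by
      rw [show (2 : ℝ) = ((2 : ℕ) : ℝ) by norm_num, Real.rpow_natCast, sq],
      ← Real.rpow_mul (l2_nonneg _)]
    norm_num
  -- Part 5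
  have part5 : l2OpNorm (A * Bᵀ) ^ ((1 : ℝ) / 2) ≤
      l2OpNorm A ^ ((1 : ℝ) / 2) * l2OpNorm B ^ ((1 : ℝ) / 2) := by
    calc l2OpNorm (A * Bᵀ) ^ ((1 : ℝ) / 2)
        ≤ (l2OpNorm A * l2OpNorm Bᵀ) ^ ((1 : ℝ) / 2) :=
          Real.rpow_le_rpow (l2_nonneg _) (l2_mul_le A Bᵀ) (by norm_num)
      _ = (l2OpNorm A * l2OpNorm B) ^ ((1 : ℝ) / 2) := by rw [l2_transpose]
      _ = l2OpNorm A ^ ((1 : ℝ) / 2) * l2OpNorm B ^ ((1 : ℝ) / 2) :=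
          Real.mul_rpow (l2_nonneg A) (l2_nonneg B)
  exact ⟨part1, part2, part3, part4, part5⟩
end

section
/- Let A₁, …, A_m be nonnegative n×n real matrices with m odd. Then ‖A₁^{(1/m)} ∘ ⋯ ∘ A_m^{(1/m)}‖ ≤ ρ(A₁A₂ᵀA₃A₄ᵀ ⋯ A_{m-2}A_{m-1}ᵀA_m A₁ᵀA₂A₃ᵀA₄ ⋯ A_{m-2}ᵀA_{m-1}A_mᵀ)^{1/(2m)}, where ‖·‖ is the Euclidean operator norm. -/
open Matrix

/-- Hadamard weighted geometric mean `A₁^{(α₁)} ∘ ⋯ ∘ A_m^{(α_m)}`. -/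
noncomputable def hadGeo {m : ℕ} {N : Type*} (A : Fin m → Matrix N N ℝ) (α : Fin m → ℝ) :
    Matrix N N ℝ :=
  fun i j => ∏ k, (A k i j) ^ (α k)

set_option linter.unusedSectionVars false

namespace Stmt16Aux

open Finset

/-- Generalized Hölder inequality with equal weights `1/m`. -/
theorem holder {m : ℕ} (hm : 0 < m) {ι : Type*} [Fintype ι] (f : Fin m → ι → ℝ)
    (hf : ∀ g s, 0 ≤ f g s) :
    ∑ s : ι, ∏ g : Fin m, f g s ^ ((1 : ℝ)/m) ≤
      ∏ g : Fin m, (∑ s : ι, f g s) ^ ((1 : ℝ)/m) := by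
  have hmR : (m : ℝ) ≠ 0 := Nat.cast_ne_zero.mpr hm.ne'
  by_cases hT : ∀ g, 0 < ∑ s : ι, f g s
  · set T : Fin m → ℝ := fun g => ∑ s : ι, f g s with hTdef
    have hT0 : ∀ g, 0 ≤ T g := fun g => (hT g).le
    have hw' : ∑ _g : Fin m, ((1 : ℝ)/m) = 1 := by
      rw [Finset.sum_const, Finset.card_univ, Fintype.card_fin, nsmul_eq_mul,
        mul_one_div_cancel hmR]
    have hsum : ∀ s : ι, ∏ g, f g s ^ ((1 : ℝ)/m)
        ≤ (∏ g, T g ^ ((1 : ℝ)/m)) * ∑ g, ((1 : ℝ)/m) * (f g s / T g) := by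
      intro s
      have h1 : ∀ g : Fin m, f g s ^ ((1 : ℝ)/m)
          = T g ^ ((1 : ℝ)/m) * (f g s / T g) ^ ((1 : ℝ)/m) := by
        intro g
        rw [← Real.mul_rpow (hT0 g) (div_nonneg (hf g s) (hT0 g))]
        rw [mul_div_cancel₀ _ (hT g).ne']
      calc ∏ g, f g s ^ ((1 : ℝ)/m)
          = (∏ g, T g ^ ((1 : ℝ)/m)) * ∏ g, (f g s / T g) ^ ((1 : ℝ)/m) := by
            rw [← Finset.prod_mul_distrib]; exact Finset.prod_congr rfl fun g _ => h1 g
        _ ≤ (∏ g, T g ^ ((1 : ℝ)/m)) * ∑ g, ((1 : ℝ)/m) * (f g s / T g) := by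
            refine mul_le_mul_of_nonneg_left ?_ (Finset.prod_nonneg fun g _ => Real.rpow_nonneg (hT0 g) _)
            exact Real.geom_mean_le_arith_mean_weighted Finset.univ _ _
              (fun i _ => by positivity) hw' (fun i _ => div_nonneg (hf i s) (hT0 i))
    calc ∑ s : ι, ∏ g, f g s ^ ((1 : ℝ)/m)
        ≤ ∑ s : ι, (∏ g, T g ^ ((1 : ℝ)/m)) * ∑ g, ((1 : ℝ)/m) * (f g s / T g) :=
          Finset.sum_le_sum fun s _ => hsum s
      _ = (∏ g, T g ^ ((1 : ℝ)/m)) * ∑ s : ι, ∑ g, ((1 : ℝ)/m) * (f g s / T g) := by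
          rw [Finset.mul_sum]
      _ = ∏ g, T g ^ ((1 : ℝ)/m) := by
          rw [Finset.sum_comm]
          have : ∀ g : Fin m, ∑ s : ι, ((1 : ℝ)/m) * (f g s / T g) = (1 : ℝ)/m := by
            intro g
            rw [← Finset.mul_sum, ← Finset.sum_div, div_self (hT g).ne', mul_one]
          rw [Finset.sum_congr rfl fun g _ => this g, hw', mul_one]
  · push_neg at hT
    obtain ⟨g₀, hg₀⟩ := hT
    have hTz : ∑ s : ι, f g₀ s = 0 :=
      le_antisymm hg₀ (Finset.sum_nonneg fun s _ => hf g₀ s)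
    have hfz : ∀ s : ι, f g₀ s = 0 := by
      intro s
      have := (Finset.sum_eq_zero_iff_of_nonneg (fun s _ => hf g₀ s)).mp hTz
      exact this s (Finset.mem_univ s)
    have hL : ∑ s : ι, ∏ g, f g s ^ ((1 : ℝ)/m) = 0 := by
      refine Finset.sum_eq_zero fun s _ => ?_
      refine Finset.prod_eq_zero (Finset.mem_univ g₀) ?_
      rw [hfz s, Real.zero_rpow (one_div_ne_zero hmR)]
    rw [hL]
    exact Finset.prod_nonneg fun g _ => Real.rpow_nonneg
      (Finset.sum_nonneg fun s _ => hf g s) _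


variable {N : Type*} [Fintype N] [DecidableEq N]

/-- `pprod f L = f 0 * f 1 * ⋯ * f (L-1)`. -/
def pprod (f : ℕ → Matrix N N ℝ) : ℕ → Matrix N N ℝ
  | 0 => 1
  | (L + 1) => pprod f L * f L

lemma pprod_add (f : ℕ → Matrix N N ℝ) (a b : ℕ) :
    pprod f (a + b) = pprod f a * pprod (fun p => f (a + p)) b := by
  induction b with
  | zero => simp [pprod]
  | succ b ih =>
      show pprod f (a + b) * f (a + b) = _
      rw [ih]
      show _ = pprod f a * (pprod (fun p => f (a + p)) b * f (a + b))
      rw [mul_assoc]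

lemma pprod_congr {f g : ℕ → Matrix N N ℝ} {L : ℕ} (h : ∀ p, p < L → f p = g p) :
    pprod f L = pprod g L := by
  induction L with
  | zero => rfl
  | succ L ih =>
      show pprod f L * f L = pprod g L * g L
      rw [ih fun p hp => h p (hp.trans (Nat.lt_succ_self L)), h L (Nat.lt_succ_self L)]

lemma pprod_nonneg {f : ℕ → Matrix N N ℝ} (hf : ∀ p i j, 0 ≤ f p i j) :
    ∀ L i j, 0 ≤ pprod f L i j := by
  intro L
  induction L with
  | zero =>
      intro i j
      show (0:ℝ) ≤ (1 : Matrix N N ℝ) i j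
      by_cases h : i = j <;> simp [Matrix.one_apply, h]
  | succ L ih =>
      intro i j
      show (0:ℝ) ≤ (pprod f L * f L) i j
      rw [Matrix.mul_apply]
      exact Finset.sum_nonneg fun s _ => mul_nonneg (ih i s) (hf L s j)

lemma pprod_per_pow (f : ℕ → Matrix N N ℝ) (d : ℕ)
    (hper : ∀ k p, f (d * k + p) = f p) : ∀ s, pprod f (d * s) = (pprod f d) ^ s := by
  intro s
  induction s with
  | zero => simp [pprod]
  | succ s ih =>
      rw [Nat.mul_succ, pprod_add, ih, pprod_congr (fun p _ => hper s p), pow_succ]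

lemma shifted_decomp (f : ℕ → Matrix N N ℝ) (d e : ℕ) (he : e ≤ d)
    (hper : ∀ k p, f (d * k + p) = f p) (s : ℕ) (hs : 1 ≤ s) :
    pprod (fun p => f (e + p)) (d * s)
      = pprod (fun p => f (e + p)) (d - e) * ((pprod f d) ^ (s - 1) * pprod f e) := by
  obtain ⟨s', rfl⟩ : ∃ s', s = s' + 1 := ⟨s - 1, by omega⟩
  have h1 : d * (s' + 1) = (d - e) + (d * s' + e) := by rw [Nat.mul_succ]; omega
  rw [h1, pprod_add]
  congr 1
  · -- second factor
    have h2 : pprod (fun p => (fun q => f (e + q)) ((d - e) + p)) (d * s' + e)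
        = pprod f (d * s' + e) := by
      refine pprod_congr fun p _ => ?_
      have h3 : e + ((d - e) + p) = d * 1 + p := by omega
      show f (e + ((d - e) + p)) = f p
      rw [h3, hper 1 p]
    rw [h2, pprod_add, pprod_per_pow f d hper s', pprod_congr (fun p _ => hper s' p)]
    simp

/-- Entrywise bound: the product of Hadamard geometric means is dominated entrywise
by the Hadamard geometric mean of "diagonal" products. -/
theorem key {m : ℕ} (hm : 0 < m)
    (M : ℕ → Fin m → Matrix N N ℝ) (hM : ∀ p k i j, 0 ≤ M p k i j)
    (σ : ℕ → Fin m → Fin m) (hσ : ∀ p, Function.Bijective (σ p)) (L : ℕ) (a b : N) :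
    pprod (fun p => fun i j => ∏ k, (M p k i j) ^ ((1 : ℝ)/m)) L a b
      ≤ ∏ g, (pprod (fun p => M p (σ p g)) L a b) ^ ((1 : ℝ)/m) := by
  have hmR : (m : ℝ) ≠ 0 := Nat.cast_ne_zero.mpr hm.ne'
  induction L generalizing a b with
  | zero =>
      show (1 : Matrix N N ℝ) a b ≤ ∏ g : Fin m, ((1 : Matrix N N ℝ) a b) ^ ((1 : ℝ)/m)
      by_cases hab : a = b
      · simp [Matrix.one_apply, hab]
      · have : (0:ℝ) ^ ((1:ℝ)/m) = 0 := Real.zero_rpow (one_div_ne_zero hmR)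
        simp [Matrix.one_apply, hab]
        positivity
  | succ L ih =>
      have hR : ∀ (g : Fin m) (i j : N), 0 ≤ pprod (fun p => M p (σ p g)) L i j :=
        fun g => pprod_nonneg (fun p i j => hM p (σ p g) i j) L
      have hunf : ∀ (f : ℕ → Matrix N N ℝ) (L : ℕ), pprod f (L+1) = pprod f L * f L :=
        fun _ _ => rfl
      show (pprod _ L * _ : Matrix N N ℝ) a b ≤ _
      show ∑ s, pprod (fun p => fun i j => ∏ k, (M p k i j) ^ ((1 : ℝ)/m)) L a s *
          (∏ k, (M L k s b) ^ ((1 : ℝ)/m)) ≤ _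
      calc ∑ s, pprod (fun p => fun i j => ∏ k, (M p k i j) ^ ((1 : ℝ)/m)) L a s *
              (∏ k, (M L k s b) ^ ((1 : ℝ)/m))
          ≤ ∑ s, ∏ g, (pprod (fun p => M p (σ p g)) L a s * M L (σ L g) s b) ^ ((1 : ℝ)/m) := by
            refine Finset.sum_le_sum fun s _ => ?_
            have e1 : ∏ k, (M L k s b) ^ ((1 : ℝ)/m)
                = ∏ g, (M L (σ L g) s b) ^ ((1 : ℝ)/m) :=
              (Fintype.prod_bijective (σ L) (hσ L)
                (fun g => (M L (σ L g) s b) ^ ((1 : ℝ)/m))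
                (fun k => (M L k s b) ^ ((1 : ℝ)/m)) (fun g => rfl)).symm
            rw [e1]
            calc pprod (fun p => fun i j => ∏ k, (M p k i j) ^ ((1 : ℝ)/m)) L a s *
                    ∏ g, (M L (σ L g) s b) ^ ((1 : ℝ)/m)
                ≤ (∏ g, (pprod (fun p => M p (σ p g)) L a s) ^ ((1 : ℝ)/m)) *
                    ∏ g, (M L (σ L g) s b) ^ ((1 : ℝ)/m) := by
                  refine mul_le_mul_of_nonneg_right (ih a s) ?_
                  exact Finset.prod_nonneg fun g _ => Real.rpow_nonneg (hM L (σ L g) s b) _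
              _ = ∏ g, (pprod (fun p => M p (σ p g)) L a s * M L (σ L g) s b) ^ ((1 : ℝ)/m) := by
                  rw [← Finset.prod_mul_distrib]
                  exact Finset.prod_congr rfl fun g _ =>
                    (Real.mul_rpow (hR g a s) (hM L (σ L g) s b)).symm
        _ ≤ ∏ g, (∑ s, pprod (fun p => M p (σ p g)) L a s * M L (σ L g) s b) ^ ((1 : ℝ)/m) :=
            holder hm _ (fun g s => mul_nonneg (hR g a s) (hM L (σ L g) s b))
        _ = ∏ g, (pprod (fun p => M p (σ p g)) (L + 1) a b) ^ ((1 : ℝ)/m) := by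
            refine Finset.prod_congr rfl fun g _ => ?_
            rw [hunf, Matrix.mul_apply]


/-- The Frobenius norm, defined by hand to stay instance-free. -/
noncomputable def frobR (M : Matrix N N ℝ) : ℝ := Real.sqrt (∑ i, ∑ j, (M i j) ^ 2)

lemma frobR_nonneg (M : Matrix N N ℝ) : 0 ≤ frobR M := Real.sqrt_nonneg _

lemma frobR_mono {X Y : Matrix N N ℝ} (hX : ∀ i j, 0 ≤ X i j) (h : ∀ i j, X i j ≤ Y i j) :
    frobR X ≤ frobR Y :=
  Real.sqrt_le_sqrt (Finset.sum_le_sum fun i _ => Finset.sum_le_sum fun j _ =>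
    pow_le_pow_left₀ (hX i j) (h i j) 2)

lemma frobR_mul (X Y : Matrix N N ℝ) : frobR (X * Y) ≤ frobR X * frobR Y := by
  rw [frobR, frobR, frobR, ← Real.sqrt_mul (Finset.sum_nonneg fun i _ =>
    Finset.sum_nonneg fun j _ => sq_nonneg (X i j))]
  refine Real.sqrt_le_sqrt ?_
  calc ∑ a, ∑ b, ((X * Y) a b) ^ 2
      = ∑ a, ∑ b, (∑ s, X a s * Y s b) ^ 2 := by
        refine Finset.sum_congr rfl fun a _ => Finset.sum_congr rfl fun b _ => ?_
        rw [Matrix.mul_apply]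
    _ ≤ ∑ a, ∑ b, (∑ s, X a s ^ 2) * (∑ s, Y s b ^ 2) :=
        Finset.sum_le_sum fun a _ => Finset.sum_le_sum fun b _ =>
          Finset.sum_mul_sq_le_sq_mul_sq _ _ _
    _ = ∑ a, (∑ s, X a s ^ 2) * (∑ b, ∑ s, Y s b ^ 2) := by
        refine Finset.sum_congr rfl fun a _ => ?_
        rw [← Finset.mul_sum]
    _ = (∑ a, ∑ s, X a s ^ 2) * (∑ b, ∑ s, Y s b ^ 2) := by
        rw [← Finset.sum_mul]
    _ = (∑ a, ∑ s, X a s ^ 2) * (∑ s, ∑ b, Y s b ^ 2) := by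
        congr 1
        exact Finset.sum_comm

lemma sq_rpow {x : ℝ} (hx : 0 ≤ x) (r : ℝ) : (x ^ r) ^ 2 = (x ^ 2) ^ r := by
  rw [← Real.rpow_natCast (x ^ r) 2, ← Real.rpow_mul hx,
    ← Real.rpow_natCast x 2, ← Real.rpow_mul hx, mul_comm]

lemma frobR_holder {m : ℕ} (hm : 0 < m) (X : Fin m → Matrix N N ℝ)
    (hX : ∀ g i j, 0 ≤ X g i j) :
    frobR (fun i j => ∏ g, (X g i j) ^ ((1 : ℝ)/m)) ≤ ∏ g, (frobR (X g)) ^ ((1 : ℝ)/m) := by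
  have hpair : ∀ (Z : Matrix N N ℝ), (∑ i, ∑ j, (Z i j) ^ 2) = ∑ p : N × N, (Z p.1 p.2) ^ 2 :=
    fun Z => (Fintype.sum_prod_type (f := fun p : N × N => (Z p.1 p.2) ^ 2)).symm
  have hkey := holder hm (ι := N × N) (fun g p => (X g p.1 p.2) ^ 2)
    (fun g p => sq_nonneg _)
  have e1 : ∀ p : N × N, ((∏ g, (X g p.1 p.2) ^ ((1 : ℝ)/m)) : ℝ) ^ 2
      = ∏ g, ((X g p.1 p.2) ^ 2) ^ ((1 : ℝ)/m) := by
    intro p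
    rw [← Finset.prod_pow]
    exact Finset.prod_congr rfl fun g _ => sq_rpow (hX g p.1 p.2) _
  have hsum : ∀ g, (0:ℝ) ≤ ∑ p : N × N, (X g p.1 p.2) ^ 2 :=
    fun g => Finset.sum_nonneg fun p _ => sq_nonneg _
  calc frobR (fun i j => ∏ g, (X g i j) ^ ((1 : ℝ)/m))
      = Real.sqrt (∑ p : N × N, ∏ g, ((X g p.1 p.2) ^ 2) ^ ((1 : ℝ)/m)) := by
        unfold frobR; rw [hpair (fun i j => ∏ g, (X g i j) ^ ((1 : ℝ)/m))]
        congr 1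
        exact Finset.sum_congr rfl fun p _ => e1 p
    _ ≤ Real.sqrt (∏ g, (∑ p : N × N, (X g p.1 p.2) ^ 2) ^ ((1 : ℝ)/m)) :=
        Real.sqrt_le_sqrt hkey
    _ = ∏ g, (frobR (X g)) ^ ((1 : ℝ)/m) := by
        rw [Real.sqrt_eq_rpow, ← Real.finset_prod_rpow _ _
          (fun g _ => Real.rpow_nonneg (hsum g) _) _]
        refine Finset.prod_congr rfl fun g _ => ?_
        rw [← Real.rpow_mul (hsum g), mul_comm, Real.rpow_mul (hsum g), frobR, hpair,
          Real.sqrt_eq_rpow]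


/-- index `p % m` as an element of `Fin m`. -/
def fidx {m : ℕ} (hm : 0 < m) (p : ℕ) : Fin m := ⟨p % m, Nat.mod_lt p hm⟩

/-- The `p`-th factor of the infinite periodic product. -/
def Gmat {m : ℕ} (hm : 0 < m) (A : Fin m → Matrix N N ℝ) (p : ℕ) : Matrix N N ℝ :=
  if p % 2 = 1 then (A (fidx hm p))ᵀ else A (fidx hm p)

lemma fidx_per {m : ℕ} (hm : 0 < m) (p k : ℕ) : fidx hm (2 * m * k + p) = fidx hm p := by
  refine Fin.ext ?_
  show (2 * m * k + p) % m = p % m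
  rw [show 2 * m * k + p = p + m * (2 * k) by ring, Nat.add_mul_mod_self_left]

lemma fidx_val {m : ℕ} (hm : 0 < m) (k : Fin m) : fidx hm k.val = k :=
  Fin.ext (Nat.mod_eq_of_lt k.isLt)

lemma Gmat_per {m : ℕ} (hm : 0 < m) (A : Fin m → Matrix N N ℝ) (k p : ℕ) :
    Gmat hm A (2 * m * k + p) = Gmat hm A p := by
  have h2 : (2 * m * k + p) % 2 = p % 2 := by
    rw [show 2 * m * k + p = p + 2 * (m * k) by ring, Nat.add_mul_mod_self_left]
  rw [Gmat, Gmat, h2, fidx_per hm p k]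

lemma Gmat_nonneg {m : ℕ} (hm : 0 < m) (A : Fin m → Matrix N N ℝ)
    (hA : ∀ k, ∀ i j, 0 ≤ A k i j) (p : ℕ) (i j : N) : 0 ≤ Gmat hm A p i j := by
  rw [Gmat]
  split
  · exact hA _ j i
  · exact hA _ i j

lemma pprod_ofFn (f : ℕ → Matrix N N ℝ) (L : ℕ) :
    (List.ofFn fun k : Fin L => f k.val).prod = pprod f L := by
  induction L with
  | zero => simp [pprod]
  | succ L ih =>
      rw [List.ofFn_succ', List.prod_concat]
      show (List.ofFn ((fun k : Fin (L+1) => f k.val) ∘ Fin.castSucc)).prod * f L = _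
      have h1 : ((fun k : Fin (L+1) => f k.val) ∘ Fin.castSucc)
          = fun k : Fin L => f k.val := by
        funext k; simp [Fin.coe_castSucc]
      rw [h1, ih]
      rfl

lemma pprod_alt (C D : Matrix N N ℝ) (t : ℕ) :
    pprod (fun p => if p % 2 = 1 then D else C) (2 * t) = (C * D) ^ t := by
  induction t with
  | zero => simp [pprod]
  | succ t ih =>
      rw [Nat.mul_succ, pprod_add, ih]
      have e : pprod (fun p => (fun q => if q % 2 = 1 then D else C) (2 * t + p)) 2 = C * D := by
        show (1 * (if (2 * t + 0) % 2 = 1 then D else C)) *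
          (if (2 * t + 1) % 2 = 1 then D else C) = C * D
        rw [if_neg (by omega), if_pos (by omega), one_mul]
      rw [e, pow_succ]

/-- The two lists in the statement multiply to `pprod (Gmat hm A) (2*m)`. -/
lemma lists_eq_pprod {m : ℕ} (hm : 0 < m) (hmo : Odd m) (A : Fin m → Matrix N N ℝ) :
    (List.ofFn fun k : Fin m => if k.val % 2 = 1 then (A k)ᵀ else A k).prod *
      (List.ofFn fun k : Fin m => if k.val % 2 = 0 then (A k)ᵀ else A k).prod
    = pprod (Gmat hm A) (2 * m) := by
  have hm2 : m % 2 = 1 := Nat.odd_iff.mp hmo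
  have h1 : (List.ofFn fun k : Fin m => if k.val % 2 = 1 then (A k)ᵀ else A k)
      = List.ofFn fun k : Fin m => Gmat hm A k.val := by
    refine congrArg List.ofFn (funext fun k => ?_)
    rw [Gmat, fidx_val hm k]
  have h2 : (List.ofFn fun k : Fin m => if k.val % 2 = 0 then (A k)ᵀ else A k)
      = List.ofFn fun k : Fin m => (fun p => Gmat hm A (m + p)) k.val := by
    refine congrArg List.ofFn (funext fun k => ?_)
    have hidx : fidx hm (m + k.val) = k := by
      refine Fin.ext ?_
      show (m + k.val) % m = k.val
      rw [Nat.add_mod_left]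
      exact Nat.mod_eq_of_lt k.isLt
    show _ = Gmat hm A (m + k.val)
    rw [Gmat, hidx]
    by_cases hk : k.val % 2 = 0
    · rw [if_pos hk, if_pos (by omega : (m + k.val) % 2 = 1)]
    · rw [if_neg hk, if_neg (by omega : ¬ (m + k.val) % 2 = 1)]
  have h1' : (List.ofFn fun k : Fin m => if k.val % 2 = 1 then (A k)ᵀ else A k).prod
      = pprod (Gmat hm A) m := by rw [h1]; exact pprod_ofFn _ _
  have h2' : (List.ofFn fun k : Fin m => if k.val % 2 = 0 then (A k)ᵀ else A k).prod
      = pprod (fun p => Gmat hm A (m + p)) m := by rw [h2]; exact pprod_ofFn (fun p => Gmat hm A (m + p)) m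
  rw [h1', h2', ← pprod_add, two_mul]


section Gelfand

attribute [local instance] Matrix.frobeniusSeminormedAddCommGroup
  Matrix.frobeniusNormedAddCommGroup Matrix.frobeniusNormedSpace
  Matrix.frobeniusNormedRing Matrix.frobeniusNormedAlgebra

lemma map_ofReal_pow (P : Matrix N N ℝ) (n : ℕ) :
    (P ^ n).map Complex.ofReal = (P.map Complex.ofReal) ^ n := by
  induction n with
  | zero =>
      rw [pow_zero, pow_zero]
      exact Matrix.map_one _ Complex.ofReal_zero Complex.ofReal_one
  | succ n ih =>
      rw [pow_succ, pow_succ, ← ih]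
      ext i j
      simp [Matrix.mul_apply, Matrix.map_apply]

lemma frobC_eq (M : Matrix N N ℝ) : ‖M.map Complex.ofReal‖ = frobR M := by
  rw [Matrix.frobenius_norm_def, frobR, Real.sqrt_eq_rpow]
  congr 1
  refine Finset.sum_congr rfl fun i _ => Finset.sum_congr rfl fun j _ => ?_
  rw [Matrix.map_apply, Complex.norm_real, Real.norm_eq_abs]
  rw [show ((2:ℝ)) = ((2:ℕ):ℝ) by norm_num, Real.rpow_natCast, sq_abs]

lemma gelfand_eventual (P : Matrix N N ℝ) {r : ℝ}
    (hr : (spectralRadius ℂ (P.map Complex.ofReal)).toReal < r) :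
    ∀ᶠ n : ℕ in Filter.atTop, frobR (P ^ n) ≤ r ^ n := by
  set P' := P.map Complex.ofReal with hP'
  have hfin : spectralRadius ℂ P' ≠ ⊤ := by
    refine ne_top_of_le_ne_top ?_ (spectrum.spectralRadius_le_pow_nnnorm_pow_one_div ℂ P' 0)
    exact ENNReal.mul_ne_top
      (ENNReal.rpow_ne_top_of_nonneg (by norm_num) ENNReal.coe_ne_top)
      (ENNReal.rpow_ne_top_of_nonneg (by norm_num) ENNReal.coe_ne_top)
  have hr0 : 0 < r := lt_of_le_of_lt ENNReal.toReal_nonneg hr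
  have hlt : spectralRadius ℂ P' < ENNReal.ofReal r := by
    conv_lhs => rw [← ENNReal.ofReal_toReal hfin]
    exact (ENNReal.ofReal_lt_ofReal_iff hr0).mpr hr
  have hlim : Filter.limsup (fun n : ℕ => (‖P' ^ n‖₊ : ENNReal) ^ (1 / (n : ℝ)))
      Filter.atTop < ENNReal.ofReal r :=
    lt_of_le_of_lt (spectrum.limsup_pow_nnnorm_pow_one_div_le_spectralRadius P') hlt
  have hev := Filter.eventually_lt_of_limsup_lt hlim
  filter_upwards [hev, Filter.eventually_ge_atTop 1] with n hn hn1
  have hnR : ((n : ℝ)) ≠ 0 := by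
    exact_mod_cast (Nat.one_le_iff_ne_zero.mp hn1)
  have h1 : (‖P' ^ n‖₊ : ENNReal) ≤ (ENNReal.ofReal r) ^ (n : ℝ) := by
    have h2 := ENNReal.rpow_le_rpow hn.le (le_of_lt (by positivity : (0:ℝ) < (n:ℝ)))
    rwa [← ENNReal.rpow_mul, one_div, inv_mul_cancel₀ hnR, ENNReal.rpow_one] at h2
  rw [ENNReal.ofReal_rpow_of_pos hr0, Real.rpow_natCast] at h1
  rw [← ENNReal.ofReal_coe_nnreal, coe_nnnorm] at h1
  have h2 : ‖P' ^ n‖ ≤ r ^ n :=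
    (ENNReal.ofReal_le_ofReal_iff (by positivity)).mp h1
  calc frobR (P ^ n) = ‖(P ^ n).map Complex.ofReal‖ := (frobC_eq _).symm
    _ = ‖P' ^ n‖ := by rw [map_ofReal_pow]
    _ ≤ r ^ n := h2

end Gelfand

section L2

open scoped Matrix.Norms.L2Operator

lemma l2OpNorm_eq (M : Matrix N N ℝ) : l2OpNorm M = ‖M‖ := rfl

lemma conjTranspose_real (X : Matrix N N ℝ) : Xᴴ = Xᵀ := by
  ext i j; simp [Matrix.conjTranspose_apply]

lemma l2_le_frobR (M : Matrix N N ℝ) : ‖M‖ ≤ frobR M := by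
  show ‖Matrix.toEuclideanCLM (𝕜 := ℝ) M‖ ≤ frobR M
  refine ContinuousLinearMap.opNorm_le_bound _ (Real.sqrt_nonneg _) fun x => ?_
  have hx : toEuclideanCLM (𝕜 := ℝ) M x
      = (WithLp.equiv 2 _).symm (M *ᵥ (WithLp.equiv 2 _ x)) := by
    rfl
  rw [hx]
  set x' : N → ℝ := WithLp.equiv 2 _ x with hx'
  have hnx : ‖x‖ = Real.sqrt (∑ j, (x' j) ^ 2) := by
    rw [EuclideanSpace.norm_eq]
    congr 1
    refine Finset.sum_congr rfl fun j _ => ?_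
    rw [Real.norm_eq_abs, sq_abs]
    rfl
  have hny : ‖(WithLp.equiv 2 (N → ℝ)).symm (M *ᵥ x')‖
      = Real.sqrt (∑ i, ((M *ᵥ x') i) ^ 2) := by
    rw [EuclideanSpace.norm_eq]
    congr 1
    refine Finset.sum_congr rfl fun i _ => ?_
    rw [Real.norm_eq_abs, sq_abs]
    congr 1
  rw [hny, hnx, frobR, ← Real.sqrt_mul (Finset.sum_nonneg fun i _ =>
    Finset.sum_nonneg fun j _ => sq_nonneg (M i j))]
  refine Real.sqrt_le_sqrt ?_
  calc ∑ i, ((M *ᵥ x') i) ^ 2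
      = ∑ i, (∑ j, M i j * x' j) ^ 2 := by
        refine Finset.sum_congr rfl fun i _ => ?_
        rw [Matrix.mulVec, dotProduct]
    _ ≤ ∑ i, (∑ j, (M i j) ^ 2) * (∑ j, (x' j) ^ 2) :=
        Finset.sum_le_sum fun i _ => Finset.sum_mul_sq_le_sq_mul_sq _ _ _
    _ = (∑ i, ∑ j, (M i j) ^ 2) * (∑ j, (x' j) ^ 2) := by rw [← Finset.sum_mul]

lemma l2_pow_le (B : Matrix N N ℝ) {t : ℕ} (ht : 1 ≤ t) :
    (l2OpNorm B) ^ (2 * t) ≤ frobR ((B * Bᵀ) ^ t) := by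
  set S := B * Bᵀ with hS
  have hsym : Sᴴ = S := by
    rw [conjTranspose_real, hS, Matrix.transpose_mul, Matrix.transpose_transpose]
  have hsymn : ∀ n : ℕ, (S ^ n)ᴴ = S ^ n := by
    intro n
    rw [conjTranspose_real, Matrix.transpose_pow, ← conjTranspose_real, hsym]
  have hBS : ‖B‖ ^ 2 = ‖S‖ := by
    have h1 := Matrix.l2_opNorm_conjTranspose_mul_self (Bᵀ)
    rw [conjTranspose_real, Matrix.transpose_transpose] at h1
    have h2 : ‖Bᵀ‖ = ‖B‖ := by
      have := Matrix.l2_opNorm_conjTranspose B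
      rwa [conjTranspose_real] at this
    rw [← hS] at h1
    rw [h1, h2, sq]
  have hpow2 : ∀ k : ℕ, ‖S ^ (2 ^ k)‖ = ‖S‖ ^ (2 ^ k) := by
    intro k
    induction k with
    | zero => simp
    | succ k ih =>
        have h1 : (2:ℕ) ^ (k+1) = 2 ^ k + 2 ^ k := by omega
        rw [h1, pow_add, pow_add]
        have h2 := Matrix.l2_opNorm_conjTranspose_mul_self (S ^ (2 ^ k))
        rw [hsymn] at h2
        rw [h2, ih]
  have hkey : ‖S‖ ^ t ≤ ‖S ^ t‖ := by
    rcases eq_or_lt_of_le (norm_nonneg S) with h0 | h0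
    · have hS0 : S = 0 := by
        rwa [eq_comm, norm_eq_zero] at h0
      rw [hS0, zero_pow (by omega : t ≠ 0), norm_zero, zero_pow (by omega : t ≠ 0)]
    · have hlt : t < 2 ^ t := Nat.lt_two_pow_self
      have h1 : ‖S‖ ^ (2 ^ t) ≤ ‖S ^ t‖ * ‖S‖ ^ (2 ^ t - t) := by
        calc ‖S‖ ^ (2 ^ t) = ‖S ^ (2 ^ t)‖ := (hpow2 t).symm
          _ = ‖S ^ t * S ^ (2 ^ t - t)‖ := by rw [← pow_add]; congr 2; omega
          _ ≤ ‖S ^ t‖ * ‖S ^ (2 ^ t - t)‖ := norm_mul_le _ _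
          _ ≤ ‖S ^ t‖ * ‖S‖ ^ (2 ^ t - t) := by
              refine mul_le_mul_of_nonneg_left ?_ (norm_nonneg _)
              exact norm_pow_le' S (by omega)
      have h2 : ‖S‖ ^ t * ‖S‖ ^ (2 ^ t - t) ≤ ‖S ^ t‖ * ‖S‖ ^ (2 ^ t - t) := by
        rwa [← pow_add, show t + (2 ^ t - t) = 2 ^ t by omega]
      exact le_of_mul_le_mul_right h2 (pow_pos h0 _)
  calc (l2OpNorm B) ^ (2 * t) = (‖B‖ ^ 2) ^ t := by rw [l2OpNorm_eq, pow_mul]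
    _ = ‖S‖ ^ t := by rw [hBS]
    _ ≤ ‖S ^ t‖ := hkey
    _ ≤ frobR (S ^ t) := l2_le_frobR _

end L2

end Stmt16Aux

open Stmt16Aux Filter

theorem stmt16 {m : ℕ} (hm : 0 < m) (hmo : Odd m) {N : Type*} [Fintype N] [DecidableEq N]
    (A : Fin m → Matrix N N ℝ) (hA : ∀ k, ∀ i j, 0 ≤ A k i j) :
    l2OpNorm (hadGeo A (fun _ => (1 : ℝ) / m)) ≤
      specRad ((List.ofFn fun k : Fin m => if k.val % 2 = 1 then (A k)ᵀ else A k).prod *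
          (List.ofFn fun k : Fin m => if k.val % 2 = 0 then (A k)ᵀ else A k).prod) ^
        ((1 : ℝ) / (2 * m)) := by
  classical
  have hmR : ((m : ℝ)) ≠ 0 := Nat.cast_ne_zero.mpr hm.ne'
  have hm2 : m % 2 = 1 := Nat.odd_iff.mp hmo
  rw [lists_eq_pprod hm hmo A]
  set B : Matrix N N ℝ := hadGeo A (fun _ => (1 : ℝ) / m) with hB
  set Pm : Matrix N N ℝ := pprod (Gmat hm A) (2 * m) with hPm
  have hx0 : 0 ≤ l2OpNorm B := norm_nonneg _
  -- the Hölder components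
  set M : ℕ → Fin m → Matrix N N ℝ := fun p k => if p % 2 = 1 then (A k)ᵀ else A k with hMdef
  have hMnn : ∀ p k i j, 0 ≤ M p k i j := by
    intro p k i j
    show (0:ℝ) ≤ (if p % 2 = 1 then (A k)ᵀ else A k) i j
    split
    · exact hA k j i
    · exact hA k i j
  set σf : ℕ → Fin m → Fin m := fun p g => fidx hm (2 * g.val + p) with hσf
  have hσbij : ∀ p, Function.Bijective (σf p) := by
    intro p
    rw [Fintype.bijective_iff_injective_and_card]
    refine ⟨fun a b hab => ?_, rfl⟩
    have hco : Nat.gcd 2 m = 1 := by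
      have h2 : ¬ (2 ∣ m) := by
        rw [Nat.dvd_iff_mod_eq_zero]
        omega
      exact (Nat.prime_two.coprime_iff_not_dvd).mpr h2
    have h1 : (2 * a.val + p) % m = (2 * b.val + p) % m := congrArg Fin.val hab
    have h1' : 2 * a.val + p ≡ 2 * b.val + p [MOD m] := h1
    have h2 : 2 * a.val ≡ 2 * b.val [MOD m] := Nat.ModEq.add_right_cancel' p h1'
    have hco' : Nat.gcd m 2 = 1 := by rwa [Nat.gcd_comm]
    have h3 : a.val ≡ b.val [MOD m] := Nat.ModEq.cancel_left_of_coprime hco' h2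
    have h4 : a.val % m = b.val % m := h3
    rw [Nat.mod_eq_of_lt a.isLt, Nat.mod_eq_of_lt b.isLt] at h4
    exact Fin.ext h4
  -- entrywise domination of powers of B * Bᵀ
  have hcoreM : (fun p => fun i j => ∏ k, (M p k i j) ^ ((1 : ℝ)/m))
      = (fun q => if q % 2 = 1 then Bᵀ else B) := by
    funext p
    by_cases hp : p % 2 = 1
    · rw [if_pos hp]
      funext i j
      show ∏ k, ((if p % 2 = 1 then (A k)ᵀ else A k) i j) ^ ((1 : ℝ)/m) = Bᵀ i j
      rw [Matrix.transpose_apply]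
      refine Finset.prod_congr rfl fun k _ => ?_
      rw [if_pos hp, Matrix.transpose_apply]
    · rw [if_neg hp]
      funext i j
      show ∏ k, ((if p % 2 = 1 then (A k)ᵀ else A k) i j) ^ ((1 : ℝ)/m) = B i j
      refine Finset.prod_congr rfl fun k _ => ?_
      rw [if_neg hp]
  have hgroup : ∀ g : Fin m, ∀ p, M p (σf p g) = Gmat hm A (2 * g.val + p) := by
    intro g p
    have h2 : (2 * g.val + p) % 2 = p % 2 := by omega
    show (if p % 2 = 1 then (A (fidx hm (2 * g.val + p)))ᵀ else A (fidx hm (2 * g.val + p))) = _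
    rw [Gmat, h2]
  have hSalt : ∀ t : ℕ, (B * Bᵀ) ^ t
      = pprod (fun p => fun i j => ∏ k, (M p k i j) ^ ((1 : ℝ)/m)) (2 * t) := by
    intro t
    rw [hcoreM, pprod_alt]
  have hmain : ∀ s, ∀ a b : N, ((B * Bᵀ) ^ (m * s)) a b
      ≤ ∏ g : Fin m, (pprod (fun p => Gmat hm A (2 * g.val + p)) (2 * m * s) a b)
          ^ ((1 : ℝ)/m) := by
    intro s a b
    rw [hSalt (m * s)]
    have hk := key hm M hMnn σf hσbij (2 * (m * s)) a b
    rw [mul_assoc 2 m s]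
    refine le_trans hk ?_
    refine le_of_eq (Finset.prod_congr rfl fun g _ => ?_)
    rw [pprod_congr (f := fun p => M p (σf p g)) (g := fun p => Gmat hm A (2 * g.val + p))
      (L := 2 * (m * s)) (fun p _ => hgroup g p)]
  -- constants
  set Um : Fin m → Matrix N N ℝ := fun g => pprod (Gmat hm A) (2 * g.val) with hUm
  set Vm : Fin m → Matrix N N ℝ :=
    fun g => pprod (fun p => Gmat hm A (2 * g.val + p)) (2 * m - 2 * g.val) with hVm
  set cg : Fin m → ℝ := fun g => frobR (Vm g) * frobR (Um g) with hcg
  have hc0 : ∀ g, 0 ≤ cg g := fun g => mul_nonneg (frobR_nonneg _) (frobR_nonneg _)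
  set Dc : ℝ := ∏ g, (cg g) ^ ((1 : ℝ)/m) with hDc
  have hD0 : 0 ≤ Dc :=
    Finset.prod_nonneg fun g _ => Real.rpow_nonneg (hc0 g) _
  have hShnn : ∀ (g : Fin m) (L : ℕ) (i j : N),
      0 ≤ pprod (fun p => Gmat hm A (2 * g.val + p)) L i j :=
    fun g L i j => pprod_nonneg (fun p i j => Gmat_nonneg hm A hA _ i j) L i j
  have hdec : ∀ (g : Fin m) (s : ℕ), 1 ≤ s →
      pprod (fun p => Gmat hm A (2 * g.val + p)) (2 * m * s)
        = Vm g * (Pm ^ (s - 1) * Um g) := by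
    intro g s hs
    have hgle : 2 * g.val ≤ 2 * m := by have := g.isLt; omega
    exact shifted_decomp (Gmat hm A) (2 * m) (2 * g.val) hgle (Gmat_per hm A) s hs
  have hfrob_chain : ∀ s, 1 ≤ s →
      frobR ((B * Bᵀ) ^ (m * s)) ≤ Dc * frobR (Pm ^ (s - 1)) := by
    intro s hs
    have hF0 : 0 ≤ frobR (Pm ^ (s - 1)) := frobR_nonneg _
    have hpownn : ∀ i j, 0 ≤ ((B * Bᵀ) ^ (m * s)) i j := by
      intro i j
      rw [hSalt (m * s)]
      refine pprod_nonneg (fun p i j => ?_) _ i j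
      exact Finset.prod_nonneg fun k _ => Real.rpow_nonneg (hMnn p k i j) _
    calc frobR ((B * Bᵀ) ^ (m * s))
        ≤ frobR (fun i j => ∏ g : Fin m,
            (pprod (fun p => Gmat hm A (2 * g.val + p)) (2 * m * s) i j) ^ ((1 : ℝ)/m)) :=
          frobR_mono hpownn (fun i j => hmain s i j)
      _ ≤ ∏ g : Fin m,
            (frobR (pprod (fun p => Gmat hm A (2 * g.val + p)) (2 * m * s))) ^ ((1 : ℝ)/m) :=
          frobR_holder hm _ (fun g i j => hShnn g _ i j)
      _ ≤ ∏ g : Fin m, (cg g * frobR (Pm ^ (s - 1))) ^ ((1 : ℝ)/m) := by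
          refine Finset.prod_le_prod (fun g _ => Real.rpow_nonneg (frobR_nonneg _) _)
            (fun g _ => Real.rpow_le_rpow (frobR_nonneg _) ?_ (by positivity))
          rw [hdec g s hs]
          calc frobR (Vm g * (Pm ^ (s - 1) * Um g))
              ≤ frobR (Vm g) * frobR (Pm ^ (s - 1) * Um g) := frobR_mul _ _
            _ ≤ frobR (Vm g) * (frobR (Pm ^ (s - 1)) * frobR (Um g)) :=
                mul_le_mul_of_nonneg_left (frobR_mul _ _) (frobR_nonneg _)
            _ = cg g * frobR (Pm ^ (s - 1)) := by rw [hcg]; ring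
      _ = Dc * frobR (Pm ^ (s - 1)) := by
          rw [hDc]
          rw [show (∏ g : Fin m, (cg g * frobR (Pm ^ (s - 1))) ^ ((1 : ℝ)/m))
              = ∏ g : Fin m, (cg g) ^ ((1 : ℝ)/m) * (frobR (Pm ^ (s - 1))) ^ ((1 : ℝ)/m)
            from Finset.prod_congr rfl fun g _ => Real.mul_rpow (hc0 g) hF0]
          rw [Finset.prod_mul_distrib, Finset.prod_const, Finset.card_univ, Fintype.card_fin]
          congr 1
          rw [← Real.rpow_natCast ((frobR (Pm ^ (s - 1))) ^ ((1 : ℝ)/m)) m,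
            ← Real.rpow_mul hF0, one_div, inv_mul_cancel₀ hmR, Real.rpow_one]
  -- conclude
  suffices hfin : (l2OpNorm B) ^ (2 * m) ≤ specRad Pm by
    have hρ0 : 0 ≤ specRad Pm := ENNReal.toReal_nonneg
    have hxx : l2OpNorm B = ((l2OpNorm B) ^ (2 * m)) ^ ((1 : ℝ) / (2 * (m:ℝ))) := by
      rw [← Real.rpow_natCast (l2OpNorm B) (2 * m), ← Real.rpow_mul hx0]
      rw [show (((2 * m : ℕ) : ℝ)) * ((1 : ℝ) / (2 * (m:ℝ))) = 1 by
        push_cast; field_simp]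
      rw [Real.rpow_one]
    rw [hxx]
    exact Real.rpow_le_rpow (by positivity) hfin (by positivity)
  refine le_of_forall_gt_imp_ge_of_dense fun r hr => ?_
  have hr0 : 0 < r := lt_of_le_of_lt ENNReal.toReal_nonneg hr
  have hev : ∀ᶠ n : ℕ in atTop, frobR (Pm ^ n) ≤ r ^ n := gelfand_eventual Pm hr
  obtain ⟨n₀, hn₀⟩ := Filter.eventually_atTop.mp hev
  set a : ℝ := (l2OpNorm B) ^ (2 * m) with ha
  have ha0 : 0 ≤ a := by positivity
  have hbound : ∀ s, n₀ + 1 ≤ s → a ≤ ((Dc + 1) * r ^ (s - 1)) ^ ((1 : ℝ)/s) := by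
    intro s hs
    have hs1 : 1 ≤ s := by omega
    have hsR : ((s : ℝ)) ≠ 0 := Nat.cast_ne_zero.mpr (by omega)
    have h1 : a ^ s ≤ (Dc + 1) * r ^ (s - 1) := by
      have h2 : a ^ s = (l2OpNorm B) ^ (2 * (m * s)) := by
        rw [ha, ← pow_mul]
        congr 1
        ring
      rw [h2]
      calc (l2OpNorm B) ^ (2 * (m * s)) ≤ frobR ((B * Bᵀ) ^ (m * s)) :=
            l2_pow_le B (by exact Nat.one_le_iff_ne_zero.mpr (by positivity))
        _ ≤ Dc * frobR (Pm ^ (s - 1)) := hfrob_chain s hs1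
        _ ≤ Dc * r ^ (s - 1) :=
            mul_le_mul_of_nonneg_left (hn₀ (s - 1) (by omega)) hD0
        _ ≤ (Dc + 1) * r ^ (s - 1) :=
            mul_le_mul_of_nonneg_right (by linarith) (by positivity)
    calc a = (a ^ s) ^ ((1 : ℝ)/s) := by
          rw [← Real.rpow_natCast a s, ← Real.rpow_mul ha0,
            show ((s : ℝ)) * ((1 : ℝ)/s) = 1 by field_simp, Real.rpow_one]
      _ ≤ ((Dc + 1) * r ^ (s - 1)) ^ ((1 : ℝ)/s) :=
          Real.rpow_le_rpow (by positivity) h1 (by positivity)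
  have hD1 : (0 : ℝ) < Dc + 1 := by linarith
  have htend : Tendsto (fun s : ℕ => ((Dc + 1) * r ^ (s - 1)) ^ ((1 : ℝ)/s))
      atTop (nhds r) := by
    have h1 : Tendsto (fun s : ℕ => (1 : ℝ)/s) atTop (nhds 0) :=
      tendsto_one_div_atTop_nhds_zero_nat
    have hT1 : Tendsto (fun s : ℕ => (Dc + 1) ^ ((1 : ℝ)/s)) atTop (nhds 1) := by
      have hc := (Real.continuousAt_const_rpow (a := Dc + 1) (b := 0) hD1.ne').tendsto
      have h2 := hc.comp h1
      simpa [Function.comp_def] using h2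
    have hT2 : Tendsto (fun s : ℕ => ((r : ℝ) ^ (s - 1)) ^ ((1 : ℝ)/s)) atTop (nhds r) := by
      have hexp : Tendsto (fun s : ℕ => (((s - 1 : ℕ) : ℝ)) * ((1 : ℝ)/s)) atTop (nhds 1) := by
        have heq : (fun s : ℕ => 1 - (1 : ℝ)/s) =ᶠ[atTop]
            (fun s : ℕ => (((s - 1 : ℕ) : ℝ)) * ((1 : ℝ)/s)) := by
          filter_upwards [Filter.eventually_ge_atTop 1] with s hs
          have hsR : ((s : ℝ)) ≠ 0 := Nat.cast_ne_zero.mpr (by omega)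
          rw [Nat.cast_sub hs]
          push_cast
          field_simp
        have h3 : Tendsto (fun s : ℕ => 1 - (1 : ℝ)/s) atTop (nhds 1) := by
          have h5 := (tendsto_const_nhds :
            Tendsto (fun _ : ℕ => (1:ℝ)) atTop (nhds 1)).sub h1
          simpa using h5
        exact h3.congr' heq
      have hc := (Real.continuousAt_const_rpow (a := r) (b := 1) hr0.ne').tendsto
      have hcomp := hc.comp hexp
      rw [Real.rpow_one] at hcomp
      have heq2 : (fun s : ℕ => (r : ℝ) ^ ((((s - 1 : ℕ) : ℝ)) * ((1 : ℝ)/s)))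
          =ᶠ[atTop] (fun s : ℕ => ((r : ℝ) ^ (s - 1)) ^ ((1 : ℝ)/s)) := by
        refine Filter.Eventually.of_forall fun s => ?_
        show r ^ ((((s - 1 : ℕ) : ℝ)) * ((1 : ℝ)/s)) = ((r : ℝ) ^ (s - 1)) ^ ((1 : ℝ)/s)
        rw [← Real.rpow_natCast r (s - 1), ← Real.rpow_mul hr0.le]
      exact hcomp.congr' heq2
    have h4 := hT1.mul hT2
    rw [one_mul] at h4
    refine h4.congr fun s => ?_
    rw [← Real.mul_rpow hD1.le (by positivity)]
  exact ge_of_tendsto htend (Filter.eventually_atTop.mpr ⟨n₀ + 1, hbound⟩)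
end
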